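/- arXiv:2102.03492 — 12 statements merged into one kernel-verified Lean document; each statement's English description precedes it below -/
import Mathlib

section
/- Let X be a J-poset. If S ⊆ X₁ and T ⊆ X₂ are nonempty finite sets, then there exists t ∈ X₁ \ S such that t < m for every m ∈ T. In particular, there are infinitely many w ∈ X₁ such that w < m for every m ∈ T. -/
open Order Set

/-- The minimal upper bound set of `A`: the minimal elements of the set of upper bounds. -/
def mub (X : Type*) [PartialOrder X] (A : Set X) : Set X :=
  {x ∈ upperBounds A | ∀ y ∈ upperBounds A, ¬ y < x}

/-- The set of elements of height `i` in `X`. -/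
def level (X : Type*) [PartialOrder X] (i : ℕ) : Set X :=
  {x : X | Order.height x = (i : ℕ∞)}

/-- A J-poset: a countable poset with a unique minimal element satisfying (J1)-(J4). -/
structure IsJPoset (X : Type*) [PartialOrder X] : Prop where
  countable : Countable X
  uniqueMin : ∃! x : X, IsMin x
  dim2 : Order.krullDim X = 2
  mubFinite : ∀ A : Set X, A.Nonempty → (mub X A).Finite
  j2 : ∀ x ∈ level X 1, {z : X | x < z}.Infinite
  j3 : ∀ m ∈ level X 2, ∀ F : Set X, F ⊆ level X 1 → F.Finite →
        ∃ K : Set X, K ⊆ level X 1 ∧ K.Finite ∧ Disjoint K F ∧ mub X K = {m}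
  j4 : ∀ T : Set X, T ⊆ level X 2 → T.Finite → T.Nonempty →
        ∃ t ∈ level X 1, ∀ m ∈ T, t < m

/-- `(A, B)` is a member of `Str X`. -/
def StrMem (X : Type*) [PartialOrder X] (A B : Set X) : Prop :=
  A ⊆ level X 1 ∧ B ⊆ level X 2 ∧
  ((A.Finite ∧ A.Nonempty ∧ B.Finite ∧ B.Nonempty) ∨
    (∃ x, x ∈ level X 1 ∧ A = {x} ∧ B = {z ∈ level X 2 | x < z})) ∧
  (∃ a ∈ A, ∀ b ∈ B, a < b)

/-- `(C, D)` dominates `(A, B)` via `W`. -/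
def Dominates (X : Type*) [PartialOrder X] (C D A B W : Set X) : Prop :=
  A ⊂ C ∧ D ⊆ B ∧ W ⊆ C ∧ W.Nonempty ∧
  (∀ w ∈ W, ∀ d ∈ D, w < d) ∧
  (∀ a ∈ A, ∀ m : X, a < m → (∀ w ∈ W, w < m) → m ∈ D)

/-- The order on `Str X`: `(A,B) ≤ (C,D)`. -/
def StrLE (X : Type*) [PartialOrder X] (A B C D : Set X) : Prop :=
  (A = C ∧ B = D) ∨ ∃ W : Set X, Dominates X C D A B W

/-- The strict order on `Str X`: `(A,B) < (C,D)`. -/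
def StrLT (X : Type*) [PartialOrder X] (A B C D : Set X) : Prop :=
  StrLE X A B C D ∧ ¬(A = C ∧ B = D)

/-- `ℓ(A,B)`: the number of `a ∈ A` with `a < b` for all `b ∈ B`. -/
noncomputable def ell (X : Type*) [PartialOrder X] (A B : Set X) : ℕ :=
  {a ∈ A | ∀ b ∈ B, a < b}.ncard

/-- `η(A,B) = |A| - ℓ(A,B)`. -/
noncomputable def eta (X : Type*) [PartialOrder X] (A B : Set X) : ℕ :=
  A.ncard - ell X A B

/-- `Str X` as a type of pairs. -/
abbrev Str (X : Type*) [PartialOrder X] := {p : Set X × Set X // StrMem X p.1 p.2}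

def strLE {X : Type*} [PartialOrder X] (p q : Str X) : Prop :=
  StrLE X p.1.1 p.1.2 q.1.1 q.1.2

def strLT {X : Type*} [PartialOrder X] (p q : Str X) : Prop :=
  strLE p q ∧ p ≠ q

/-- Membership in `Str_F X`: members of `Str X` with both coordinates finite. -/
def StrFMem (X : Type*) [PartialOrder X] (A B : Set X) : Prop :=
  StrMem X A B ∧ A.Finite ∧ B.Finite

/-- `Str_F X` as a type of pairs. -/
abbrev StrF (X : Type*) [PartialOrder X] := {p : Set X × Set X // StrFMem X p.1 p.2}

def strFLE {X : Type*} [PartialOrder X] (p q : StrF X) : Prop :=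
  StrLE X p.1.1 p.1.2 q.1.1 q.1.2

/-- `K_{Str_F X}(z)`: all `(K, {b}) ∈ Str_F X` with `z ∈ K` and `mub K = {b}`. -/
def KSet (X : Type*) [PartialOrder X] (z : X) : Set (StrF X) :=
  {p | z ∈ p.1.1 ∧ ∃ b : X, p.1.2 = {b} ∧ mub X p.1.1 = {b}}

/-- The three-element poset `𝕀₂`: two incomparable minimal elements below one top element,
realized as the nonempty subsets of a two-element set ordered by inclusion. -/
abbrev I2 := {s : Set (Fin 2) // s.Nonempty}

/-- In a J-poset, for nonempty finite `S ⊆ X₁`, `T ⊆ X₂`, there is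
`t ∈ X₁ \ S` with `t < m` for all `m ∈ T`; in particular there are infinitely many
`w ∈ X₁` with `w < m` for all `m ∈ T`. -/
theorem stmt_0 {X : Type*} [PartialOrder X] (hX : IsJPoset X)
    (S T : Set X) (hS1 : S ⊆ level X 1) (hT2 : T ⊆ level X 2)
    (hSf : S.Finite) (hTf : T.Finite) (hSne : S.Nonempty) (hTne : T.Nonempty) :
    (∃ t ∈ level X 1 \ S, ∀ m ∈ T, t < m) ∧
    {w ∈ level X 1 | ∀ m ∈ T, w < m}.Infinite := by
  classical
  set W : Set X := {w ∈ level X 1 | ∀ m ∈ T, w < m} with hWdef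
  have hW1 : W ⊆ level X 1 := fun w hw => hw.1
  -- every element strictly above a height-1 element has height 2
  have hup : ∀ k : X, k ∈ level X 1 → ∀ z : X, k < z → z ∈ level X 2 := by
    intro k hk z hkz
    have hk1 : Order.height k = (1 : ℕ∞) := hk
    have hfin : Order.height k < ⊤ := by rw [hk1]; exact lt_top_iff_ne_top.mpr (by simp)
    have hlt : Order.height k < Order.height z := Order.height_strictMono hkz hfin
    have hle : Order.height z ≤ (2 : ℕ∞) := by
      have h1 := Order.height_le_krullDim z
      rw [hX.dim2] at h1
      have h2 : ((Order.height z : WithBot ℕ∞)) ≤ ((2:ℕ∞) : WithBot ℕ∞) := by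
        convert h1 using 2
        simp
      exact WithBot.coe_le_coe.mp h2
    have hge : (2 : ℕ∞) ≤ Order.height z := by
      rw [hk1] at hlt
      have := Order.add_one_le_of_lt hlt
      simpa [one_add_one_eq_two] using this
    exact le_antisymm hle hge
  have hWinf : W.Infinite := by
    by_contra hWfin
    rw [Set.not_infinite] at hWfin
    obtain ⟨m₀, hm₀⟩ := hTne
    obtain ⟨K, hK1, hKfin, hKW, hKmub⟩ := hX.j3 m₀ (hT2 hm₀) W hW1 hWfin
    -- K is nonempty
    have hKne : K.Nonempty := by
      by_contra hKe
      rw [Set.not_nonempty_iff_eq_empty] at hKe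
      subst hKe
      have hm : m₀ ∈ mub X (∅ : Set X) := by rw [hKmub]; rfl
      have hmin : IsMin m₀ := by
        intro y hy
        by_contra hne
        exact hm.2 y (by simp [upperBounds]) (lt_of_le_of_ne hy (fun h => hne (h ▸ le_rfl)))
      have h0 : Order.height m₀ = 0 := Order.height_eq_zero.mpr hmin
      have h2 : Order.height m₀ = (2 : ℕ∞) := hT2 hm₀
      rw [h0] at h2
      exact (by norm_num : (0:ℕ∞) ≠ 2) h2
    obtain ⟨k, hkK⟩ := hKne
    have hk1 : k ∈ level X 1 := hK1 hkK
    have hZinf : {z : X | k < z}.Infinite := hX.j2 k hk1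
    set Z : Set X := {z : X | k < z} with hZdef
    -- each z ∈ Z admits some t ∈ W with t < z
    have key : ∀ z ∈ Z, ∃ t ∈ W, t < z := by
      intro z hz
      have hz2 : z ∈ level X 2 := hup k hk1 z hz
      have hT' : insert z T ⊆ level X 2 := by
        intro x hx
        rcases hx with rfl | hx
        · exact hz2
        · exact hT2 hx
      obtain ⟨t, ht1, htlt⟩ := hX.j4 (insert z T) hT' (hTf.insert z) ⟨z, Set.mem_insert z T⟩
      exact ⟨t, ⟨ht1, fun m hm => htlt m (Set.mem_insert_of_mem z hm)⟩,
        htlt z (Set.mem_insert z T)⟩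
    -- pigeonhole: some t ∈ W is below infinitely many z ∈ Z
    have hpig : ∃ t ∈ W, {z ∈ Z | t < z}.Infinite := by
      by_contra hcon
      push_neg at hcon
      have hsub : Z ⊆ ⋃ t ∈ W, {z ∈ Z | t < z} := by
        intro z hz
        obtain ⟨t, htW, htz⟩ := key z hz
        exact Set.mem_biUnion htW ⟨hz, htz⟩
      exact hZinf (Set.Finite.subset (hWfin.biUnion hcon) hsub)
    obtain ⟨t, htW, hZ'inf⟩ := hpig
    -- t ≠ k since K and W are disjoint
    have htk : t ≠ k := fun h => (Set.disjoint_left.mp hKW hkK) (h ▸ htW)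
    -- every z in the infinite fiber is a minimal upper bound of {t, k}
    have hsub : {z ∈ Z | t < z} ⊆ mub X {t, k} := by
      rintro z ⟨hzZ, htz⟩
      have hz2 : z ∈ level X 2 := hup k hk1 z hzZ
      constructor
      · intro a ha
        rcases ha with rfl | ha
        · exact le_of_lt htz
        · rw [Set.mem_singleton_iff] at ha
          exact ha ▸ le_of_lt hzZ
      · intro y hy hyz
        have hty : t ≤ y := hy (Set.mem_insert t {k})
        have hky : k ≤ y := hy (by simp)
        have hy2 : Order.height y < ⊤ := by
          calc Order.height y ≤ Order.height z := Order.height_mono (le_of_lt hyz)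
            _ = (2 : ℕ∞) := hz2
            _ < ⊤ := lt_top_iff_ne_top.mpr (by simp)
        have hylt : Order.height y < Order.height z := Order.height_strictMono hyz hy2
        have hy1 : Order.height y = (1 : ℕ∞) := by
          have hge : (1 : ℕ∞) ≤ Order.height y := by
            have := Order.height_mono hky
            rw [(hk1 : Order.height k = (1:ℕ∞))] at this
            exact this
          have hle : Order.height y ≤ (1 : ℕ∞) := by
            rw [(hz2 : Order.height z = (2:ℕ∞))] at hylt
            exact Order.le_of_lt_add_one (by rw [one_add_one_eq_two]; exact hylt)
          exact le_antisymm hle hge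
        have hkey : k = y := by
          rcases lt_or_eq_of_le hky with hlt | h
          · exfalso
            have hfin : Order.height k < ⊤ := by
              rw [(hk1 : Order.height k = (1:ℕ∞))]; exact lt_top_iff_ne_top.mpr (by simp)
            have := Order.height_strictMono hlt hfin
            rw [(hk1 : Order.height k = (1:ℕ∞)), hy1] at this
            exact lt_irrefl _ this
          · exact h
        have htkey : t = y := by
          rcases lt_or_eq_of_le hty with hlt | h
          · exfalso
            have hfin : Order.height t < ⊤ := by
              rw [(htW.1 : Order.height t = (1:ℕ∞))]; exact lt_top_iff_ne_top.mpr (by simp)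
            have := Order.height_strictMono hlt hfin
            rw [(htW.1 : Order.height t = (1:ℕ∞)), hy1] at this
            exact lt_irrefl _ this
          · exact h
        exact htk (htkey.trans hkey.symm)
    exact (hZ'inf.mono hsub) (hX.mubFinite {t, k} ⟨t, Set.mem_insert t {k}⟩)
  refine ⟨?_, hWinf⟩
  obtain ⟨w, hwW, hwS⟩ := (hWinf.diff hSf).nonempty
  exact ⟨w, ⟨hwW.1, hwS⟩, hwW.2⟩
end

section
/- Let R be a commutative Noetherian ring, let P be a prime ideal of R with height P ≥ 2, and let F be a finite set of height-one prime ideals of R. Then there exists a finite set K of height-one prime ideals of R, disjoint from F, such that in the poset of prime ideals of R ordered by inclusion, the set of minimal elements of the set of prime ideals containing every member of K is exactly {P}. -/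
open Order Set

section Hopkins

variable {B : Type*} [CommRing B]

private lemma my_isArtinian_of_isSimpleModule (V : Type*) [AddCommGroup V] [Module B V]
    [IsSimpleModule B V] : IsArtinian B V := by
  have : Finite (Submodule B V) := by
    refine Finite.of_injective (fun x : Submodule B V => (x = ⊤ : Prop)) ?_
    intro x y hxy
    rcases eq_bot_or_eq_top x with hx | hx <;> rcases eq_bot_or_eq_top y with hy | hy <;>
      subst hx <;> subst hy
    · rfl
    · exact ((iff_of_eq hxy).mpr rfl : (⊥:Submodule B V) = ⊤)
    · exact (((iff_of_eq hxy).mp rfl) : (⊥:Submodule B V) = ⊤).symm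
    · rfl
  exact Finite.to_wellFoundedLT

private lemma my_isArtinian_of_torsion (m : Ideal B) (hm : m.IsMaximal)
    (V : Type*) [AddCommGroup V] [Module B V] [Module.Finite B V]
    (htor : ∀ b ∈ m, ∀ v : V, b • v = 0) : IsArtinian B V := by
  haveI : IsSimpleModule B (B ⧸ m) :=
    isSimpleModule_iff_isCoatom.mpr (Ideal.isMaximal_def.mp hm)
  haveI hA : IsArtinian B (B ⧸ m) := my_isArtinian_of_isSimpleModule _
  obtain ⟨s, hs⟩ := Module.Finite.fg_top (R := B) (M := V)
  haveI : DecidableEq V := Classical.decEq V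
  -- lift maps
  have hker : ∀ v : V, m ≤ LinearMap.ker (LinearMap.toSpanSingleton B V v) := by
    intro v b hb
    simpa [LinearMap.mem_ker] using htor b hb v
  let φ : V → (B ⧸ m →ₗ[B] V) := fun v =>
    Submodule.liftQ m (LinearMap.toSpanSingleton B V v) (hker v)
  let f : ((↥s : Type _) → B ⧸ m) →ₗ[B] V :=
    LinearMap.lsum B (fun _ : ↥s => B ⧸ m) B (fun i => φ i.1)
  have hf : Function.Surjective f := by
    rw [← LinearMap.range_eq_top, ← top_le_iff, ← hs, Submodule.span_le]
    intro v hv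
    refine ⟨Pi.single (⟨v, hv⟩ : ↥s) (Submodule.Quotient.mk 1), ?_⟩
    simp only [f, LinearMap.lsum_apply]
    simp only [LinearMap.coe_sum, LinearMap.coe_comp, Function.comp_apply,
      Finset.sum_apply, LinearMap.proj_apply]
    rw [Finset.sum_eq_single (⟨v, hv⟩ : ↥s)]
    · rw [Pi.single_eq_same]
      show (Submodule.liftQ m (LinearMap.toSpanSingleton B V v) (hker v))
        (Submodule.Quotient.mk 1) = v
      rw [Submodule.liftQ_apply, LinearMap.toSpanSingleton_apply, one_smul]
    · intro b _ hb
      rw [Pi.single_eq_of_ne hb]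
      simp
    · intro h; exact absurd (Finset.mem_univ _) h
  exact isArtinian_of_surjective _ f hf

private lemma my_isArtinianRing_of_pow_eq_bot [IsNoetherianRing B] (m : Ideal B)
    (hm : m.IsMaximal) (c : ℕ) (hc : m ^ c = ⊥) : IsArtinianRing B := by
  have step : ∀ j : ℕ, IsArtinian B (m ^ (j + 1) : Ideal B) → IsArtinian B (m ^ j : Ideal B) := by
    intro j hart
    have hle : (m ^ (j + 1) : Ideal B) ≤ m ^ j := Ideal.pow_le_pow_right j.le_succ
    set S : Submodule B (m ^ j : Ideal B) :=
      Submodule.comap (m ^ j : Ideal B).subtype (m ^ (j + 1)) with hS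
    have h1 : IsArtinian B S :=
      isArtinian_of_linearEquiv (Submodule.comapSubtypeEquivOfLe hle).symm
    haveI hfin : Module.Finite B (m ^ j : Ideal B) :=
      Module.Finite.iff_fg.mpr (IsNoetherian.noetherian _)
    have h2 : IsArtinian B ((m ^ j : Ideal B) ⧸ S) := by
      refine my_isArtinian_of_torsion m hm _ ?_
      intro b hb v
      obtain ⟨w, rfl⟩ := Submodule.Quotient.mk_surjective S v
      rw [← Submodule.Quotient.mk_smul, Submodule.Quotient.mk_eq_zero]
      rw [hS, Submodule.mem_comap]
      show ((b • w : (m ^ j : Ideal B)) : B) ∈ m ^ (j + 1)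
      have : ((b • w : (m ^ j : Ideal B)) : B) = (w : B) * b := by
        simp [mul_comm]
      rw [this, pow_succ]
      exact Ideal.mul_mem_mul w.2 hb
    exact (isArtinian_iff_submodule_quotient S).mpr ⟨h1, h2⟩
  have key : ∀ i : ℕ, IsArtinian B (m ^ (c - i) : Ideal B) := by
    intro i
    induction i with
    | zero =>
      rw [Nat.sub_zero, hc]
      haveI : Subsingleton (⊥ : Ideal B) := by infer_instance
      haveI : Finite (⊥ : Ideal B) := Finite.of_subsingleton
      exact isArtinian_of_finite
    | succ i ih =>
      rcases le_or_gt c i with h | h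
      · have e1 : c - (i + 1) = c - i := by omega
        rw [e1]; exact ih
      · have e2 : c - i = (c - (i + 1)) + 1 := by omega
        rw [e2] at ih
        exact step _ ih
  have := key c
  rw [Nat.sub_self, pow_zero, Ideal.one_eq_top] at this
  exact (Submodule.topEquiv (R := B) (M := B)).isArtinian_iff.mp this

end Hopkins

section PIT

private lemma my_pit_local {A : Type*} [CommRing A] [IsNoetherianRing A] (x : A) (mA : Ideal A)
    (huniq : ∀ P : Ideal A, P.IsPrime → x ∈ P → P = mA) (hmax : mA.IsMaximal)
    (hjac : x ∈ Ideal.jacobson (⊥ : Ideal A))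
    (Q Q' : Ideal A) (hQp : Q.IsPrime) (hQ'p : Q'.IsPrime) (hlt : Q' < Q) (hxQ : x ∉ Q) :
    False := by
  classical
  haveI := hQp; haveI := hQ'p
  set I : Ideal A := Ideal.span {x} with hI
  set π : A →+* A ⧸ I := Ideal.Quotient.mk I with hπ
  have hxm : x ∈ mA := by
    have h : Ideal.jacobson (⊥ : Ideal A) ≤ mA := sInf_le ⟨bot_le, hmax⟩
    exact h hjac
  have hIm : I ≤ mA := Ideal.span_le.mpr (Set.singleton_subset_iff.mpr hxm)
  have hItop : I ≠ ⊤ := fun h => hmax.ne_top (top_le_iff.mp (h ▸ hIm))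
  haveI : Nontrivial (A ⧸ I) := Ideal.Quotient.nontrivial_iff.mpr hItop
  have hprimes : ∀ Pb : Ideal (A ⧸ I), Pb.IsPrime → Pb = mA.map π := by
    intro Pb hPb
    haveI := hPb
    have h1 : (Pb.comap π).IsPrime := Ideal.IsPrime.comap π
    have hxP : x ∈ Pb.comap π := by
      show π x ∈ Pb
      have hx0 : π x = 0 := by
        rw [hπ, Ideal.Quotient.eq_zero_iff_mem]; exact Ideal.subset_span rfl
      rw [hx0]; exact Pb.zero_mem
    have heq := huniq _ h1 hxP
    calc Pb = (Pb.comap π).map π :=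
          (Ideal.map_comap_of_surjective π Ideal.Quotient.mk_surjective Pb).symm
    _ = mA.map π := by rw [heq]
  have hmbar_max : (mA.map π).IsMaximal := by
    obtain ⟨Mb, hMb⟩ := Ideal.exists_maximal (A ⧸ I)
    rw [← hprimes Mb hMb.isPrime]; exact hMb
  have hnil : nilradical (A ⧸ I) = mA.map π := by
    rw [nilradical_eq_sInf]
    refine le_antisymm (sInf_le hmbar_max.isPrime) (le_sInf ?_)
    intro J hJ; rw [hprimes J hJ]
  obtain ⟨c, hc⟩ := IsNoetherianRing.isNilpotent_nilradical (A ⧸ I)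
  rw [hnil] at hc
  haveI hart : IsArtinianRing (A ⧸ I) :=
    my_isArtinianRing_of_pow_eq_bot (mA.map π) hmbar_max c (by simpa using hc)
  -- localization at Q
  set L := Localization.AtPrime Q with hL
  set ψ : A →+* L := algebraMap A L with hψ
  haveI hLnoeth : IsNoetherianRing L :=
    IsLocalization.isNoetherianRing Q.primeCompl L ‹IsNoetherianRing A›
  set Sn : ℕ → Ideal A := fun n => ((Q ^ n).map ψ).comap ψ with hSn
  set D : ℕ → Ideal A := fun n => Sn n ⊔ I with hD
  have hSanti : ∀ {a b : ℕ}, a ≤ b → Sn b ≤ Sn a := fun hab =>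
    Ideal.comap_mono (Ideal.map_mono (Ideal.pow_le_pow_right hab))
  have hDanti : ∀ {a b : ℕ}, a ≤ b → D b ≤ D a := fun hab => sup_le_sup_right (hSanti hab) I
  obtain ⟨J, ⟨n₀, hn₀⟩, hJmin⟩ := IsArtinian.set_has_minimal (R := A ⧸ I) (M := A ⧸ I)
      {J | ∃ n : ℕ, J = (D (n + 1)).map π} ⟨(D 1).map π, 0, rfl⟩
  have hcom : ∀ n, ((D n).map π).comap π = D n := by
    intro n
    rw [Ideal.comap_map_of_surjective π Ideal.Quotient.mk_surjective]
    refine sup_eq_left.mpr ?_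
    rw [← RingHom.ker_eq_comap_bot, hπ, Ideal.mk_ker]
    exact le_sup_right
  have hDN : D (n₀ + 1) = D (n₀ + 2) := by
    have h1 : (D (n₀ + 2)).map π ≤ (D (n₀ + 1)).map π :=
      Ideal.map_mono (hDanti (Nat.le_succ _))
    have h2 : ¬ (D (n₀ + 2)).map π < J := hJmin _ ⟨n₀ + 1, rfl⟩
    rw [hn₀] at h2
    have h3 : (D (n₀ + 2)).map π = (D (n₀ + 1)).map π := h1.lt_or_eq.resolve_left h2
    rw [← hcom (n₀ + 1), ← hcom (n₀ + 2), h3]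
  have hkey : Sn (n₀ + 1) ≤ Sn (n₀ + 2) ⊔ I • Sn (n₀ + 1) := by
    intro a ha
    have haD : a ∈ D (n₀ + 2) := hDN ▸ (Submodule.mem_sup_left ha)
    rw [hD] at haD
    obtain ⟨b, hb, c', hc', rfl⟩ := Submodule.mem_sup.mp haD
    obtain ⟨r, rfl⟩ := Ideal.mem_span_singleton'.mp hc'
    have hrx : r * x ∈ Sn (n₀ + 1) := by
      have h := (Sn (n₀ + 1)).sub_mem ha (hSanti (Nat.le_succ _) hb)
      simpa using h
    have hr : r ∈ Sn (n₀ + 1) := by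
      show ψ r ∈ (Q ^ (n₀ + 1)).map ψ
      obtain ⟨u, hu⟩ := IsLocalization.map_units L (⟨x, hxQ⟩ : Q.primeCompl)
      have h1 : ψ r * ψ x ∈ (Q ^ (n₀ + 1)).map ψ := by
        rw [← map_mul]; exact hrx
      have h2 : ψ r = ψ r * ψ x * ↑u⁻¹ := by
        rw [← hu, mul_assoc, Units.mul_inv, mul_one]
      rw [h2]
      exact Ideal.mul_mem_right _ _ h1
    refine Submodule.add_mem _ (Submodule.mem_sup_left hb) (Submodule.mem_sup_right ?_)
    rw [Ideal.smul_eq_mul]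
    exact mul_comm x r ▸ Ideal.mul_mem_mul (Ideal.subset_span rfl) hr
  have hIjac : I ≤ Ideal.jacobson (⊥ : Ideal A) :=
    Ideal.span_le.mpr (Set.singleton_subset_iff.mpr hjac)
  have hS12 : Sn (n₀ + 1) ≤ Sn (n₀ + 2) :=
    Submodule.le_of_le_smul_of_le_jacobson_bot (IsNoetherian.noetherian _) hIjac hkey
  have hmapS : ∀ n, (Sn n).map ψ = (Q ^ n).map ψ := fun n =>
    IsLocalization.map_comap Q.primeCompl L _
  have hQL : (Q ^ (n₀ + 1)).map ψ = (Q ^ (n₀ + 2)).map ψ := by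
    refine le_antisymm ?_ (Ideal.map_mono (Ideal.pow_le_pow_right (Nat.le_succ _)))
    rw [← hmapS (n₀ + 1), ← hmapS (n₀ + 2)]
    exact Ideal.map_mono hS12
  have hsmul : (Q ^ (n₀ + 1)).map ψ ≤ (Q.map ψ) • ((Q ^ (n₀ + 1)).map ψ) := by
    rw [Ideal.smul_eq_mul, ← Ideal.map_mul, ← pow_succ', ← hQL]
  have hjacL : Q.map ψ ≤ Ideal.jacobson (⊥ : Ideal L) := by
    rw [IsLocalRing.jacobson_eq_maximalIdeal (⊥ : Ideal L) bot_ne_top]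
    exact le_of_eq Localization.AtPrime.map_eq_maximalIdeal
  have hbot : (Q ^ (n₀ + 1)).map ψ = ⊥ :=
    Submodule.eq_bot_of_le_smul_of_le_jacobson_bot (Q.map ψ) _ (IsNoetherian.noetherian _)
      hsmul hjacL
  have hQ'disj : Disjoint (Q.primeCompl : Set A) (Q' : Set A) :=
    Set.disjoint_left.mpr fun {a} ha ha' => ha (hlt.le ha')
  haveI hQ'L : ((Q'.map ψ)).IsPrime :=
    IsLocalization.isPrime_of_isPrime_disjoint Q.primeCompl L Q' hQ'p hQ'disj
  have hle2 : Q.map ψ ≤ Q'.map ψ := by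
    refine hQ'L.le_of_pow_le (n := n₀ + 1) ?_
    rw [← Ideal.map_pow, hbot]
    exact bot_le
  have hQQ' : Q ≤ Q' := by
    have h1 : (Q.map ψ).comap ψ = Q :=
      IsLocalization.comap_map_of_isPrime_disjoint Q.primeCompl L hQp
        (Set.disjoint_left.mpr fun {a} ha ha' => ha ha')
    have h2 : (Q'.map ψ).comap ψ = Q' :=
      IsLocalization.comap_map_of_isPrime_disjoint Q.primeCompl L hQ'p hQ'disj
    rw [← h1, ← h2]
    exact Ideal.comap_mono hle2
  exact hlt.not_ge hQQ'

end PIT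

private lemma my_pit {R : Type*} [CommRing R] [IsNoetherianRing R] (x : R) (p : Ideal R)
    (hp : p ∈ (Ideal.span {x}).minimalPrimes) {q q' : Ideal R}
    (hq : q.IsPrime) (hq' : q'.IsPrime) (h1 : q' < q) (h2 : q < p) : False := by
  haveI hpp : p.IsPrime := hp.1.1
  set A := Localization.AtPrime p with hA
  set φ : R →+* A := algebraMap R A with hφ
  haveI : IsNoetherianRing A := IsLocalization.isNoetherianRing p.primeCompl A ‹_›
  have hxp : x ∈ p := hp.1.2 (Ideal.subset_span rfl)
  have hxq : x ∉ q := by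
    intro hxq
    exact h2.not_ge (hp.2 ⟨hq, Ideal.span_le.mpr (Set.singleton_subset_iff.mpr hxq)⟩ h2.le)
  have hdisj : ∀ {t : Ideal R}, t ≤ p → Disjoint (p.primeCompl : Set R) (t : Set R) :=
    fun ht => Set.disjoint_left.mpr fun {a} ha ha' => ha (ht ha')
  haveI hQp : ((q.map φ)).IsPrime :=
    IsLocalization.isPrime_of_isPrime_disjoint p.primeCompl A q hq (hdisj h2.le)
  haveI hQ'p : ((q'.map φ)).IsPrime :=
    IsLocalization.isPrime_of_isPrime_disjoint p.primeCompl A q' hq' (hdisj (h1.le.trans h2.le))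
  have hcomq : (q.map φ).comap φ = q :=
    IsLocalization.comap_map_of_isPrime_disjoint _ _ hq (hdisj h2.le)
  have hcomq' : (q'.map φ).comap φ = q' :=
    IsLocalization.comap_map_of_isPrime_disjoint _ _ hq' (hdisj (h1.le.trans h2.le))
  have hlt : q'.map φ < q.map φ := by
    refine lt_of_le_of_ne (Ideal.map_mono h1.le) ?_
    intro h
    apply h1.ne
    rw [← hcomq', ← hcomq, h]
  have hxQ : φ x ∉ q.map φ := by
    intro h
    exact hxq (by rw [← hcomq]; exact h)
  have hmax : (IsLocalRing.maximalIdeal A).IsMaximal := IsLocalRing.maximalIdeal.isMaximal A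
  have hjac : φ x ∈ Ideal.jacobson (⊥ : Ideal A) := by
    rw [IsLocalRing.jacobson_eq_maximalIdeal (⊥ : Ideal A) bot_ne_top,
      ← Localization.AtPrime.map_eq_maximalIdeal]
    exact Ideal.mem_map_of_mem φ hxp
  have huniq : ∀ P : Ideal A, P.IsPrime → φ x ∈ P → P = IsLocalRing.maximalIdeal A := by
    intro P hP hxP
    haveI := hP
    have hcom : (P.comap φ).IsPrime := Ideal.IsPrime.comap φ
    have hle : P.comap φ ≤ p :=
      (Ideal.comap_mono (IsLocalRing.le_maximalIdeal hP.ne_top)).trans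
        (le_of_eq (Localization.AtPrime.comap_maximalIdeal (I := p)))
    have heq : P.comap φ = p :=
      le_antisymm hle (hp.2 ⟨hcom, Ideal.span_le.mpr (Set.singleton_subset_iff.mpr hxP)⟩ hle)
    rw [← IsLocalization.map_comap p.primeCompl A P, (show P.under R = p from heq),
      Localization.AtPrime.map_eq_maximalIdeal]
  exact my_pit_local (φ x) _ huniq hmax hjac (q.map φ) (q'.map φ) hQp hQ'p hlt hxQ

private lemma my_exists_height_one {R : Type*} [CommRing R] [IsNoetherianRing R] (x : R)
    (P : Ideal R) (hP : P.IsPrime) (hx : x ∈ P)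
    (hmin : ∀ m ∈ minimalPrimes R, x ∉ m) :
    ∃ q : PrimeSpectrum R, x ∈ q.asIdeal ∧ q.asIdeal ≤ P ∧ Order.height q = 1 := by
  haveI := hP
  obtain ⟨q₀, hq₀, hq₀P⟩ := Ideal.exists_minimalPrimes_le (I := Ideal.span {x}) (J := P)
    (Ideal.span_le.mpr (Set.singleton_subset_iff.mpr hx))
  haveI hq₀p : q₀.IsPrime := hq₀.1.1
  have hxq₀ : x ∈ q₀ := hq₀.1.2 (Ideal.subset_span rfl)
  refine ⟨⟨q₀, hq₀p⟩, hxq₀, hq₀P, ?_⟩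
  have hmin_lt : ∀ y : PrimeSpectrum R, y < ⟨q₀, hq₀p⟩ → IsMin y := by
    intro y hy z hz
    by_contra hn
    have hzy : z < y := hz.lt_of_ne fun h => hn (h ▸ le_rfl)
    exact my_pit x q₀ hq₀ y.2 z.2 ((PrimeSpectrum.asIdeal_lt_asIdeal z y).mpr hzy)
      ((PrimeSpectrum.asIdeal_lt_asIdeal y ⟨q₀, hq₀p⟩).mpr hy)
  have h1 : Order.height (⟨q₀, hq₀p⟩ : PrimeSpectrum R) ≤ (1 : ℕ) := by
    rw [Order.height_le_coe_iff]
    intro y hy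
    rw [Order.height_eq_zero.mpr (hmin_lt y hy)]
    exact_mod_cast zero_lt_one
  obtain ⟨m, hm, hmq⟩ := Ideal.exists_minimalPrimes_le (I := (⊥ : Ideal R)) (J := q₀) bot_le
  haveI hmp : m.IsPrime := hm.1.1
  have hxm : x ∉ m := hmin m hm
  have hlt : (⟨m, hmp⟩ : PrimeSpectrum R) < ⟨q₀, hq₀p⟩ := by
    rw [← PrimeSpectrum.asIdeal_lt_asIdeal]
    exact lt_of_le_of_ne hmq (fun h => hxm (by rw [show m = q₀ from h]; exact hxq₀))
  have h2 : Order.height (⟨q₀, hq₀p⟩ : PrimeSpectrum R) ≠ 0 := by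
    rw [Ne, Order.height_eq_zero]
    intro h
    exact hlt.not_ge (h hlt.le)
  refine le_antisymm (by exact_mod_cast h1) ?_
  exact ENat.one_le_iff_ne_zero.mpr h2

private lemma my_avoid {R : Type*} [CommRing R] (P : Ideal R) (T : Set (Ideal R))
    (hT : T.Finite) (hTp : ∀ I ∈ T, I.IsPrime) (hnle : ∀ I ∈ T, ¬ P ≤ I) :
    ∃ x ∈ P, ∀ I ∈ T, x ∉ I := by
  classical
  by_contra hcon
  push_neg at hcon
  have hsub : (P : Set R) ⊆ ⋃ I ∈ (↑hT.toFinset : Set (Ideal R)), ((id I : Ideal R) : Set R) := by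
    intro x hx
    obtain ⟨I, hI, hxI⟩ := hcon x hx
    exact Set.mem_biUnion (by simpa using hI) hxI
  obtain ⟨I, hI, hle⟩ := (Ideal.subset_union_prime (s := hT.toFinset) (f := id) ⊥ ⊥
    (fun I hI _ _ => hTp I (hT.mem_toFinset.mp hI))).mp hsub
  exact hnle I (hT.mem_toFinset.mp hI) hle

private lemma my_minimalPrimes_finite {R : Type*} [CommRing R] [IsNoetherianRing R]
    (J : Ideal R) : J.minimalPrimes.Finite := by
  rw [Ideal.minimalPrimes_eq_comap]
  exact (minimalPrimes.finite_of_isNoetherianRing (R ⧸ J)).image _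


/-- If `R` is a commutative Noetherian ring, `P` a prime of height at least two,
and `F` a finite set of height-one primes, then there is a finite set `K` of height-one
primes, disjoint from `F`, whose minimal upper bound set in `Spec R` is exactly `{P}`. -/
theorem stmt_1 {R : Type*} [CommRing R] [IsNoetherianRing R]
    (P : PrimeSpectrum R) (hP : 2 ≤ Order.height P)
    (F : Set (PrimeSpectrum R)) (hFf : F.Finite)
    (hF1 : ∀ q ∈ F, Order.height q = 1) :
    ∃ K : Set (PrimeSpectrum R), K.Finite ∧ (∀ q ∈ K, Order.height q = 1) ∧
      Disjoint K F ∧ mub (PrimeSpectrum R) K = {P} := by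
  classical
  set PI : Ideal R := P.asIdeal with hPI
  haveI hPp : PI.IsPrime := P.2
  have hnle_min : ∀ m ∈ minimalPrimes R, ¬ PI ≤ m := by
    intro m hm hle
    haveI hmp : m.IsPrime := hm.1.1
    have hismin : IsMin (⟨m, hmp⟩ : PrimeSpectrum R) := by
      intro z hz
      rw [← PrimeSpectrum.asIdeal_le_asIdeal] at hz ⊢
      exact hm.2 ⟨z.2, bot_le⟩ hz
    have h0 : Order.height (⟨m, hmp⟩ : PrimeSpectrum R) = 0 := Order.height_eq_zero.mpr hismin
    have hle' : P ≤ ⟨m, hmp⟩ := (PrimeSpectrum.asIdeal_le_asIdeal _ _).mp hle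
    have := hP.trans (Order.height_mono hle')
    rw [h0] at this
    exact absurd this (by norm_num)
  have hnle_F : ∀ f ∈ F, ¬ PI ≤ f.asIdeal := by
    intro f hf hle
    have hle' : P ≤ f := (PrimeSpectrum.asIdeal_le_asIdeal _ _).mp hle
    have := hP.trans (Order.height_mono hle')
    rw [hF1 f hf] at this
    exact absurd this (by norm_num)
  have hfind : ∀ (T : Set (Ideal R)), T.Finite → (∀ I ∈ T, I.IsPrime) → (∀ I ∈ T, ¬ PI ≤ I) →
      ∃ (q : PrimeSpectrum R) (x : R), x ∈ q.asIdeal ∧ Order.height q = 1 ∧ q.asIdeal ≤ PI ∧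
        q ∉ F ∧ ∀ I ∈ T, x ∉ I := by
    intro T hTfin hTp hTnle
    set T' : Set (Ideal R) := T ∪ minimalPrimes R ∪ (PrimeSpectrum.asIdeal '' F) with hT'
    have hT'fin : T'.Finite :=
      (hTfin.union (minimalPrimes.finite_of_isNoetherianRing R)).union (hFf.image _)
    have hT'p : ∀ I ∈ T', I.IsPrime := by
      rintro I ((hI | hI) | ⟨f, hf, rfl⟩)
      · exact hTp I hI
      · exact hI.1.1
      · exact f.2
    have hT'nle : ∀ I ∈ T', ¬ PI ≤ I := by
      rintro I ((hI | hI) | ⟨f, hf, rfl⟩)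
      · exact hTnle I hI
      · exact hnle_min I hI
      · exact hnle_F f hf
    obtain ⟨x, hxP, hxn⟩ := my_avoid PI T' hT'fin hT'p hT'nle
    obtain ⟨q, hxq, hqP, hq1⟩ := my_exists_height_one x PI hPp hxP
      (fun m hm => hxn m (Or.inl (Or.inr hm)))
    refine ⟨q, x, hxq, hq1, hqP, ?_, fun I hI => hxn I (Or.inl (Or.inl hI))⟩
    intro hqF
    exact hxn q.asIdeal (Or.inr ⟨q, hqF, rfl⟩) hxq
  set 𝒮 : Set (Ideal R) := {J | ∃ K : Set (PrimeSpectrum R), K.Finite ∧ K.Nonempty ∧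
      (∀ q ∈ K, Order.height q = 1 ∧ q.asIdeal ≤ PI ∧ q ∉ F) ∧
      J = (⨆ q ∈ K, q.asIdeal).radical} with h𝒮
  have h𝒮ne : 𝒮.Nonempty := by
    obtain ⟨q, x, hxq, hq1, hqP, hqF, -⟩ := hfind ∅ finite_empty (by simp) (by simp)
    refine ⟨_, {q}, finite_singleton q, singleton_nonempty q, ?_, rfl⟩
    rintro q' hq'
    rw [mem_singleton_iff] at hq'
    subst hq'
    exact ⟨hq1, hqP, hqF⟩
  obtain ⟨J, hJ𝒮, hJmax⟩ : ∃ J : Ideal R, J ∈ 𝒮 ∧ ∀ I ∈ 𝒮, ¬ J < I := by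
    obtain ⟨J, h1, h2⟩ := (set_has_maximal_iff_noetherian.mpr (isNoetherianRing_iff.mp ‹_›))
      𝒮 h𝒮ne
    exact ⟨J, h1, h2⟩
  obtain ⟨K, hKfin, hKne, hKgood, hJeq⟩ := hJ𝒮
  have hsupP : (⨆ q ∈ K, (q : PrimeSpectrum R).asIdeal) ≤ PI :=
    iSup₂_le fun q hq => (hKgood q hq).2.1
  have hJle : J ≤ PI := by
    rw [hJeq]
    calc (⨆ q ∈ K, (q : PrimeSpectrum R).asIdeal).radical ≤ PI.radical :=
          Ideal.radical_mono hsupP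
    _ = PI := hPp.radical
  have hJrad : J.radical = J := by rw [hJeq, Ideal.radical_idem]
  have hJP : J = PI := by
    by_cases hn : PI ≤ J
    · exact le_antisymm hJle hn
    exfalso
    have hMfin : J.minimalPrimes.Finite := my_minimalPrimes_finite J
    set 𝒬 : Set (Ideal R) := {Q | Q ∈ J.minimalPrimes ∧ ¬ PI ≤ Q} with h𝒬
    obtain ⟨Q₀, hQ₀⟩ : 𝒬.Nonempty := by
      by_contra hne
      rw [Set.not_nonempty_iff_eq_empty] at hne
      apply hn
      have hall : ∀ Q ∈ J.minimalPrimes, PI ≤ Q := by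
        intro Q hQ
        by_contra hc
        exact Set.notMem_empty Q (hne ▸ (⟨hQ, hc⟩ : Q ∈ 𝒬))
      have h1 : PI ≤ sInf J.minimalPrimes := le_sInf hall
      rwa [Ideal.sInf_minimalPrimes, hJrad] at h1
    obtain ⟨q, x, hxq, hq1, hqP, hqF, hxn⟩ := hfind 𝒬 (hMfin.subset (fun Q hQ => hQ.1))
      (fun I hI => hI.1.1.1) (fun I hI => hI.2)
    set J' : Ideal R := (⨆ p ∈ insert q K, (p : PrimeSpectrum R).asIdeal).radical with hJ'
    have hJ'𝒮 : J' ∈ 𝒮 := by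
      refine ⟨insert q K, hKfin.insert q, ⟨q, mem_insert q K⟩, ?_, rfl⟩
      rintro q' (rfl | hq')
      · exact ⟨hq1, hqP, hqF⟩
      · exact hKgood q' hq'
    have hJJ' : J ≤ J' := by
      rw [hJeq, hJ']
      exact Ideal.radical_mono (biSup_mono (subset_insert q K))
    have hxJ' : x ∈ J' := by
      apply Ideal.le_radical
      exact (le_iSup₂_of_le q (mem_insert q K) le_rfl : q.asIdeal ≤ _) hxq
    have hxJ : x ∉ J := by
      intro hxJ
      have h1 : J ≤ Q₀ := by
        conv_lhs => rw [← hJrad, ← Ideal.sInf_minimalPrimes]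
        exact sInf_le hQ₀.1
      exact hxn Q₀ hQ₀ (h1 hxJ)
    exact hJmax J' hJ'𝒮 (lt_of_le_of_ne hJJ' (fun h => hxJ (h ▸ hxJ')))
  refine ⟨K, hKfin, fun q hq => (hKgood q hq).1, ?_, ?_⟩
  · rw [Set.disjoint_left]
    intro q hq
    exact (hKgood q hq).2.2
  · have hub : upperBounds K = {y : PrimeSpectrum R | P ≤ y} := by
      ext y
      constructor
      · intro hy
        have hsup : (⨆ q ∈ K, (q : PrimeSpectrum R).asIdeal) ≤ y.asIdeal :=
          iSup₂_le fun q hq => (PrimeSpectrum.asIdeal_le_asIdeal q y).mpr (hy hq)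
        have h2 : J ≤ y.asIdeal := by
          rw [hJeq]
          exact y.2.radical_le_iff.mpr hsup
        rw [hJP] at h2
        exact (PrimeSpectrum.asIdeal_le_asIdeal P y).mp h2
      · intro hy q hq
        rw [← PrimeSpectrum.asIdeal_le_asIdeal]
        exact (hKgood q hq).2.1.trans ((PrimeSpectrum.asIdeal_le_asIdeal P y).mpr hy)
    ext z
    simp only [mub, Set.mem_sep_iff, hub, Set.mem_setOf_eq, Set.mem_singleton_iff]
    constructor
    · rintro ⟨h1, h2⟩
      exact ((h1.lt_or_eq).resolve_left (h2 P le_rfl)).symm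
    · rintro rfl
      exact ⟨le_rfl, fun y hy hlt => absurd (hy.trans_lt hlt) (lt_irrefl _)⟩
end

section
/- Let X be a J-poset. The relation ≤ on Str X is transitive, hence (Str X, ≤) is a partially ordered set. Specifically, if (A₁,B₁) < (A₂,B₂) and (A₂,B₂) < (A₃,B₃) in Str X, and (A₃,B₃) dominates (A₂,B₂) via W, then (A₃,B₃) dominates (A₁,B₁) via the same set W. -/
open Order Set

/-- The relation `≤` on `Str X` is reflexive, antisymmetric and transitive,
hence a partial order; and specifically if `(A₁,B₁) < (A₂,B₂)` and `(A₃,B₃)` dominates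
`(A₂,B₂)` via `W`, then `(A₃,B₃)` dominates `(A₁,B₁)` via the same set `W`. -/
theorem stmt_2 {X : Type*} [PartialOrder X] (hX : IsJPoset X) :
    (∀ A B : Set X, StrMem X A B → StrLE X A B A B) ∧
    (∀ A B C D : Set X, StrMem X A B → StrMem X C D →
      StrLE X A B C D → StrLE X C D A B → A = C ∧ B = D) ∧
    (∀ A B C D E F : Set X, StrMem X A B → StrMem X C D → StrMem X E F →
      StrLE X A B C D → StrLE X C D E F → StrLE X A B E F) ∧
    (∀ A₁ B₁ A₂ B₂ A₃ B₃ W : Set X, StrMem X A₁ B₁ → StrMem X A₂ B₂ → StrMem X A₃ B₃ →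
      StrLT X A₁ B₁ A₂ B₂ → Dominates X A₃ B₃ A₂ B₂ W → Dominates X A₃ B₃ A₁ B₁ W) := by
  refine ⟨fun A B _ => Or.inl ⟨rfl, rfl⟩, ?_, ?_, ?_⟩
  · rintro A B C D _ _ (⟨rfl, rfl⟩ | ⟨W, hW⟩) h2
    · exact ⟨rfl, rfl⟩
    · rcases h2 with ⟨rfl, rfl⟩ | ⟨W', hW'⟩
      · exact ⟨rfl, rfl⟩
      · exact absurd (hW.1.trans hW'.1) (ssubset_irrefl A)
  · rintro A B C D E F _ _ _ (⟨rfl, rfl⟩ | ⟨W1, h1⟩) h2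
    · exact h2
    · rcases h2 with ⟨rfl, rfl⟩ | ⟨W2, h2⟩
      · exact Or.inr ⟨W1, h1⟩
      · exact Or.inr ⟨W2, h1.1.trans h2.1, h2.2.1.trans h1.2.1, h2.2.2.1, h2.2.2.2.1,
          h2.2.2.2.2.1, fun a ha m ham hw => h2.2.2.2.2.2 a (h1.1.subset ha) m ham hw⟩
  · rintro A₁ B₁ A₂ B₂ A₃ B₃ W _ _ _ ⟨hle, hne⟩ hdom
    have h12 : A₁ ⊆ A₂ ∧ B₂ ⊆ B₁ := by
      rcases hle with ⟨rfl, rfl⟩ | ⟨W', h⟩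
      · exact absurd ⟨rfl, rfl⟩ hne
      · exact ⟨h.1.subset, h.2.1⟩
    exact ⟨h12.1.trans_ssubset hdom.1, hdom.2.1.trans h12.2, hdom.2.2.1, hdom.2.2.2.1,
      hdom.2.2.2.2.1, fun a ha m ham hw => hdom.2.2.2.2.2 a (h12.1 ha) m ham hw⟩
end

section
/- Let X be a J-poset, let (A,B) ∈ Str X, let b ∈ B, and let K ⊆ X₁ be a finite set disjoint from A with mub(K) = {b}. Then (A ∪ K, {b}) ∈ Str X and (A,B) < (A ∪ K, {b}) in Str X; in fact (A ∪ K, {b}) dominates (A,B) via K. -/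
open Order Set

/-- If `(A,B) ∈ Str X`, `b ∈ B`, and `K ⊆ X₁` is a finite set disjoint from `A`
with `mub K = {b}`, then `(A ∪ K, {b}) ∈ Str X`, `(A,B) < (A ∪ K, {b})`, and in fact
`(A ∪ K, {b})` dominates `(A,B)` via `K`. -/
theorem stmt_3 {X : Type*} [PartialOrder X] (hX : IsJPoset X)
    (A B : Set X) (hAB : StrMem X A B) (b : X) (hb : b ∈ B)
    (K : Set X) (hK1 : K ⊆ level X 1) (hKf : K.Finite) (hdisj : Disjoint K A)
    (hmub : mub X K = {b}) :
    StrMem X (A ∪ K) {b} ∧ StrLT X A B (A ∪ K) {b} ∧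
    Dominates X (A ∪ K) {b} A B K := by
  obtain ⟨hA1, hB2, hcase, a, haA, ha⟩ := hAB
  have hbl : b ∈ level X 2 := hB2 hb
  have hbmub : b ∈ mub X K := by rw [hmub]; rfl
  -- K is nonempty
  have hKne : K.Nonempty := by
    by_contra h
    rw [Set.not_nonempty_iff_eq_empty] at h
    subst h
    have hmin : IsMin b := by
      intro y hy
      by_contra hlt
      exact hbmub.2 y (by intro z hz; exact hz.elim) (lt_of_le_of_ne hy (by
        intro he; exact hlt (he ▸ le_refl y)))
    have := Order.height_eq_zero.mpr hmin
    rw [show Order.height b = (2 : ℕ∞) from hbl] at this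
    exact (by norm_num : (2 : ℕ∞) ≠ 0) this
  -- heights bounded by 2
  have hht : ∀ x : X, Order.height x ≤ 2 := by
    intro x
    have h := Order.height_le_krullDim x
    rw [hX.dim2, show (2 : WithBot ℕ∞) = ((2:ℕ∞) : WithBot ℕ∞) from rfl] at h
    exact WithBot.coe_le_coe.mp h
  -- every element of K is strictly below b
  have hKb : ∀ w ∈ K, w < b := by
    intro w hw
    have hle : w ≤ b := hbmub.1 hw
    refine lt_of_le_of_ne hle ?_
    intro he
    have h1 : Order.height w = 1 := hK1 hw
    have h2 : Order.height w = 2 := he ▸ hbl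
    rw [h1] at h2
    exact (by norm_num : (1 : ℕ∞) ≠ 2) h2
  -- A is finite and nonempty
  have hAfin : A.Finite ∧ A.Nonempty := by
    rcases hcase with ⟨hf, hne, _⟩ | ⟨x, _, hAx, _⟩
    · exact ⟨hf, hne⟩
    · exact ⟨hAx ▸ Set.finite_singleton x, hAx ▸ Set.singleton_nonempty x⟩
  -- E3 core: any strict upper bound of K is b
  have hE3 : ∀ m : X, (∀ w ∈ K, w < m) → m = b := by
    intro m hm
    have hub : m ∈ upperBounds K := fun w hw => (hm w hw).le
    have hmmub : m ∈ mub X K := by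
      refine ⟨hub, ?_⟩
      intro y hy hlt
      obtain ⟨w, hw⟩ := hKne
      have hwy : w ≤ y := hy hw
      have hw1 : Order.height w = 1 := hK1 hw
      rcases eq_or_lt_of_le hwy with he | hlt'
      · -- y ∈ K is an upper bound, so mub K = {y}, hence y = b, but heights differ
        have hymub : y ∈ mub X K := ⟨hy, fun z hz hzy => absurd (hz (he ▸ hw)) hzy.not_ge⟩
        rw [hmub, Set.mem_singleton_iff] at hymub
        have : Order.height y = 2 := hymub ▸ hbl
        rw [← he, hw1] at this
        exact (by norm_num : (1 : ℕ∞) ≠ 2) this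
      · -- w < y < m gives height m ≥ 3 > 2
        have h1 : Order.height w < Order.height y :=
          Order.height_strictMono hlt' (lt_of_le_of_lt (hht w) (lt_top_iff_ne_top.mpr (by decide)))
        have h2 : Order.height y < Order.height m :=
          Order.height_strictMono hlt (lt_of_le_of_lt (hht y) (lt_top_iff_ne_top.mpr (by decide)))
        rw [hw1] at h1
        have : (2 : ℕ∞) < Order.height m :=
          lt_of_le_of_lt (Order.add_one_le_of_lt h1) h2
        exact absurd (hht m) this.not_ge
    rw [hmub] at hmmub
    exact hmmub
  -- the domination
  have hdom : Dominates X (A ∪ K) {b} A B K := by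
    refine ⟨?_, Set.singleton_subset_iff.mpr hb, Set.subset_union_right, hKne, ?_, ?_⟩
    · constructor
      · exact Set.subset_union_left
      · intro hsub
        obtain ⟨w, hw⟩ := hKne
        exact Set.disjoint_left.mp hdisj hw (hsub (Set.mem_union_right A hw))
    · intro w hw d hd
      rw [Set.mem_singleton_iff] at hd
      exact hd ▸ hKb w hw
    · intro a' _ m _ hm
      exact hE3 m hm
  have hmem : StrMem X (A ∪ K) {b} := by
    refine ⟨Set.union_subset hA1 hK1, Set.singleton_subset_iff.mpr hbl, ?_, ?_⟩
    · left
      exact ⟨hAfin.1.union hKf, hAfin.2.mono Set.subset_union_left,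
        Set.finite_singleton b, Set.singleton_nonempty b⟩
    · exact ⟨a, Set.mem_union_left K haA, fun d hd => hd ▸ ha b hb⟩
  refine ⟨hmem, ⟨Or.inr ⟨K, hdom⟩, ?_⟩, hdom⟩
  rintro ⟨hAeq, -⟩
  obtain ⟨w, hw⟩ := hKne
  exact Set.disjoint_left.mp hdisj hw (hAeq ▸ Set.mem_union_right A hw)
end

section
/- Let X be a J-poset. For every a ∈ X₁, the element ({a}, {z ∈ X₂ : z > a}) has height 0 in Str X; that is, the only element of Str X that is ≤ ({a}, {z ∈ X₂ : z > a}) is ({a}, {z ∈ X₂ : z > a}) itself. Consequently, if (A,B) ∈ Str X has height greater than 0 in Str X, then B is finite. -/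
open Order Set

/-- For every `a ∈ X₁`, the element `({a}, {z ∈ X₂ : z > a})` has height `0`
in `Str X` (the only element of `Str X` below it is itself); consequently, if
`(A,B) ∈ Str X` has height greater than `0` in `Str X`, then `B` is finite. -/
theorem stmt_4 {X : Type*} [PartialOrder X] (hX : IsJPoset X) :
    (∀ a ∈ level X 1, ∀ C D : Set X, StrMem X C D →
      StrLE X C D {a} {z ∈ level X 2 | a < z} →
      C = {a} ∧ D = {z ∈ level X 2 | a < z}) ∧
    (∀ A B : Set X, StrMem X A B →
      (∃ C D : Set X, StrMem X C D ∧ StrLT X C D A B) → B.Finite) := by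
  have key : ∀ a ∈ level X 1, ∀ C D : Set X, StrMem X C D →
      StrLE X C D {a} {z ∈ level X 2 | a < z} →
      C = {a} ∧ D = {z ∈ level X 2 | a < z} := by
    intro a _ C D hCD hle
    rcases hle with ⟨h1, h2⟩ | ⟨W, hA, _⟩
    · exact ⟨h1, h2⟩
    · exfalso
      obtain ⟨c, hc, _⟩ := hCD.2.2.2
      have hca : c = a := hA.1 hc
      exact hA.2 (Set.singleton_subset_iff.2 (hca ▸ hc))
  refine ⟨key, ?_⟩
  rintro A B hAB ⟨C, D, hCD, hle, hne⟩
  rcases hAB.2.2.1 with ⟨_, _, hBfin, _⟩ | ⟨x, hx, hAx, hBx⟩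
  · exact hBfin
  · exfalso
    subst hAx; subst hBx
    exact hne (key x hx C D hCD hle)
end

section
/- Let X be a J-poset, let (A,B), (C,D) ∈ Str X, and suppose b ∈ B ∩ D. Then there exists J ⊆ X₁ such that (J, {b}) ∈ Str X, (A,B) < (J,{b}) in Str X, and (C,D) < (J,{b}) in Str X. -/
open Order Set

/-- If `(A,B), (C,D) ∈ Str X` and `b ∈ B ∩ D`, then there is `J ⊆ X₁` with
`(J,{b}) ∈ Str X`, `(A,B) < (J,{b})`, and `(C,D) < (J,{b})` in `Str X`. -/
theorem stmt_5 {X : Type*} [PartialOrder X] (hX : IsJPoset X)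
    (A B C D : Set X) (hAB : StrMem X A B) (hCD : StrMem X C D)
    (b : X) (hbB : b ∈ B) (hbD : b ∈ D) :
    ∃ J : Set X, J ⊆ level X 1 ∧ StrMem X J {b} ∧
      StrLT X A B J {b} ∧ StrLT X C D J {b} := by
 -- proof
  obtain ⟨hA1, hB2, hABalt, a0, ha0A, ha0lt⟩ := hAB
  obtain ⟨hC1, hD2, hCDalt, c0, hc0C, hc0lt⟩ := hCD
  have hAfin : A.Finite := by
    rcases hABalt with ⟨h, _⟩ | ⟨x, _, rfl, _⟩
    · exact h
    · exact Set.finite_singleton x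
  have hCfin : C.Finite := by
    rcases hCDalt with ⟨h, _⟩ | ⟨x, _, rfl, _⟩
    · exact h
    · exact Set.finite_singleton x
  have hb2 : b ∈ level X 2 := hB2 hbB
  obtain ⟨K, hK1, hKfin, hKdisj, hKmub⟩ :=
    hX.j3 b hb2 (A ∪ C) (Set.union_subset hA1 hC1) (hAfin.union hCfin)
  have hbmub : b ∈ mub X K := hKmub ▸ Set.mem_singleton b
  have hbub : b ∈ upperBounds K := hbmub.1
  have hKne : K.Nonempty := by
    rcases Set.eq_empty_or_nonempty K with rfl | h
    · exfalso
      have hmin : IsMin b := by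
        intro y hy
        by_contra hyb
        exact hbmub.2 y (by simp [upperBounds]) (lt_of_le_not_ge hy hyb)
      have : Order.height b = 0 := Order.height_eq_zero.mpr hmin
      rw [hb2] at this
      exact (by norm_num : (2 : ℕ∞) ≠ 0) this
    · exact h
  have hmle : ∀ m : X, Order.height m ≤ 2 := by
    intro m
    have h1 := Order.height_le_krullDim m
    rw [hX.dim2] at h1
    exact WithBot.coe_le_coe.mp h1
  have hkb : ∀ k ∈ K, k < b := by
    intro k hk
    have hle : k ≤ b := hbub hk
    rcases lt_or_eq_of_le hle with h | h
    · exact h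
    · exfalso
      have h1 : Order.height k = 1 := hK1 hk
      have h2 : Order.height b = 2 := hb2
      rw [h, h2] at h1
      exact (by norm_num : (2 : ℕ∞) ≠ 1) h1
  have hE3 : ∀ m : X, (∀ w ∈ K, w < m) → m = b := by
    intro m hwm
    have hmub : m ∈ upperBounds K := fun k hk => (hwm k hk).le
    have hmmub : m ∈ mub X K := by
      refine ⟨hmub, fun y hy hym => ?_⟩
      obtain ⟨k, hk⟩ := hKne
      have hk1 : Order.height k = 1 := hK1 hk
      have hkley : k ≤ y := hy hk
      rcases lt_or_eq_of_le hkley with hlt | heq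
      · -- k < y < m : heights 1 < h(y) < h(m) ≤ 2, contradiction
        have hy2 : Order.height y ≤ 2 := hmle y
        have h1 : Order.height k < Order.height y :=
          Order.height_strictMono hlt (by rw [hk1]; exact lt_top_iff_ne_top.mpr (by simp))
        have h2 : Order.height y < Order.height m :=
          Order.height_strictMono hym (lt_of_le_of_lt hy2 (lt_top_iff_ne_top.mpr (by simp)))
        have h3 : Order.height m ≤ 2 := hmle m
        rw [hk1] at h1
        have : (1:ℕ∞) + 1 ≤ Order.height y := ENat.add_one_le_iff (by norm_num) |>.mpr h1
        have : (2:ℕ∞) < 2 := lt_of_le_of_lt (le_trans (by norm_num) this) (lt_of_lt_of_le h2 h3)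
        exact absurd this (lt_irrefl _)
      · -- y = k ∈ K is an upper bound of K, so y = b, but heights differ
        subst heq
        have hkb' : k ≤ b := hbub hk
        have hnlt : ¬ k < b := hbmub.2 k hy
        have this : k = b := by
          rcases lt_or_eq_of_le hkb' with h | h
          · exact absurd h hnlt
          · exact h
        have h2 : Order.height b = 2 := hb2
        rw [this, h2] at hk1
        exact absurd hk1 (by norm_num)
    rw [hKmub] at hmmub
    exact hmmub
  -- define J
  refine ⟨A ∪ C ∪ K, ?_, ?_, ?_, ?_⟩
  · exact Set.union_subset (Set.union_subset hA1 hC1) hK1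
  · refine ⟨Set.union_subset (Set.union_subset hA1 hC1) hK1,
      Set.singleton_subset_iff.mpr hb2, Or.inl ⟨(hAfin.union hCfin).union hKfin,
        ⟨a0, Or.inl (Or.inl ha0A)⟩, Set.finite_singleton b, Set.singleton_nonempty b⟩,
      a0, Or.inl (Or.inl ha0A), ?_⟩
    intro x hx
    rw [Set.mem_singleton_iff] at hx
    rw [hx]
    exact ha0lt b hbB
  · -- (A,B) < (J, {b})
    obtain ⟨k, hk⟩ := hKne
    have hkA : k ∉ A := fun h => Set.disjoint_left.mp hKdisj hk (Or.inl h)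
    have hAsub : A ⊂ A ∪ C ∪ K := by
      refine ⟨fun x hx => Or.inl (Or.inl hx), fun h => hkA (h (Or.inr hk))⟩
    constructor
    · refine Or.inr ⟨K, hAsub, Set.singleton_subset_iff.mpr hbB, fun x hx => Or.inr hx,
        ⟨k, hk⟩, fun w hw d hd => ?_, fun a _ m _ hwm => ?_⟩
      · rw [Set.mem_singleton_iff] at hd; subst hd; exact hkb w hw
      · exact Set.mem_singleton_iff.mpr (hE3 m hwm)
    · rintro ⟨hAeq, -⟩
      rw [hAeq] at hkA
      exact hkA (Or.inr hk)
  · -- (C,D) < (J, {b})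
    obtain ⟨k, hk⟩ := hKne
    have hkC : k ∉ C := fun h => Set.disjoint_left.mp hKdisj hk (Or.inr h)
    have hCsub : C ⊂ A ∪ C ∪ K := by
      refine ⟨fun x hx => Or.inl (Or.inr hx), fun h => hkC (h (Or.inr hk))⟩
    constructor
    · refine Or.inr ⟨K, hCsub, Set.singleton_subset_iff.mpr hbD, fun x hx => Or.inr hx,
        ⟨k, hk⟩, fun w hw d hd => ?_, fun a _ m _ hwm => ?_⟩
      · rw [Set.mem_singleton_iff] at hd; subst hd; exact hkb w hw
      · exact Set.mem_singleton_iff.mpr (hE3 m hwm)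
    · rintro ⟨hCeq, -⟩
      rw [hCeq] at hkC
      exact hkC (Or.inr hk)
end

section
/- Let X be a J-poset and let (A,B) ∈ Str X. Then (A,B) has height greater than 0 in Str X if and only if B = mub(K) for some K ⊆ A. -/
open Order Set

section Aux
variable {X : Type*} [PartialOrder X]

lemma height_le_two (hdim : Order.krullDim X = 2) (x : X) : Order.height x ≤ 2 := by
  have h := Order.height_le_krullDim x
  rw [hdim] at h
  rw [show ((2 : WithBot ℕ∞)) = ((2 : ℕ∞) : WithBot ℕ∞) from rfl] at h
  exact WithBot.coe_le_coe.mp h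

lemma level2_of_level1_lt (hdim : Order.krullDim X = 2) {x y : X}
    (hx : x ∈ level X 1) (hxy : x < y) : y ∈ level X 2 := by
  have h1 : Order.height x < Order.height y :=
    Order.height_strictMono hxy (by rw [show Order.height x = 1 from hx]; decide)
  rw [show Order.height x = 1 from hx] at h1
  have h2 := height_le_two hdim y
  have : (2 : ℕ∞) ≤ Order.height y := Order.add_one_le_of_lt h1
  exact le_antisymm h2 this

lemma level1_eq_of_le {x y : X} (hx : x ∈ level X 1) (hy : y ∈ level X 1)
    (hxy : x ≤ y) : x = y := by
  rcases hxy.lt_or_eq with h | h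
  · have h1 : Order.height x < Order.height y :=
      Order.height_strictMono h (by rw [show Order.height x = 1 from hx]; decide)
    rw [show Order.height x = 1 from hx, show Order.height y = 1 from hy] at h1
    exact absurd h1 (by decide)
  · exact h

lemma level2_not_lt {b b' : X} (hb : b ∈ level X 2) (hb' : b' ∈ level X 2) :
    ¬ b' < b := by
  intro h
  have h1 : Order.height b' < Order.height b :=
    Order.height_strictMono h (by rw [show Order.height b' = 2 from hb']; decide)
  rw [show Order.height b' = 2 from hb', show Order.height b = 2 from hb] at h1
  exact absurd h1 (by decide)

/-- If `K ⊆ level 1` has two distinct elements, every upper bound of `K` is strictly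
above every element of `K`. -/
lemma strict_above_of_ub {K : Set X} (hK : K ⊆ level X 1) {k₁ k₂ : X}
    (h1 : k₁ ∈ K) (h2 : k₂ ∈ K) (hne : k₁ ≠ k₂) {m : X} (hm : m ∈ upperBounds K) :
    ∀ k ∈ K, k < m := by
  intro k hk
  rcases (hm hk).lt_or_eq with h | h
  · exact h
  · subst h
    exact absurd ((level1_eq_of_le (hK h1) (hK hk) (hm h1)).trans
      (level1_eq_of_le (hK h2) (hK hk) (hm h2)).symm) hne

lemma mub_eq_of_ub_eq {K B : Set X}
    (hB : B ⊆ level X 2) (h : upperBounds K = B) : mub X K = B := by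
  ext b
  constructor
  · rintro ⟨hb, -⟩; rwa [h] at hb
  · intro hb
    refine ⟨by rwa [h], ?_⟩
    intro y hy hlt
    rw [h] at hy
    exact level2_not_lt (hB hb) (hB hy) hlt

end Aux

/-- `(A,B) ∈ Str X` has height greater than `0` in `Str X` if and only if
`B = mub K` for some `K ⊆ A`. -/
theorem stmt_6 {X : Type*} [PartialOrder X] (hX : IsJPoset X)
    (A B : Set X) (hAB : StrMem X A B) :
    (∃ C D : Set X, StrMem X C D ∧ StrLT X C D A B) ↔
    (∃ K : Set X, K ⊆ A ∧ B = mub X K) := by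
  obtain ⟨hA1, hB2, hcase, a₀, ha₀A, ha₀B⟩ := hAB
  constructor
  · rintro ⟨C, D, ⟨hC1, hD2, hcaseCD, c₀, hc₀C, hc₀D⟩, hle, hne⟩
    rcases hle with h | ⟨W, hCA, hBD, hWA, hWne, hWB, hE3⟩
    · exact absurd h hne
    have hc₀A : c₀ ∈ A := hCA.1 hc₀C
    have hc₀B : ∀ b ∈ B, c₀ < b := fun b hb => hc₀D b (hBD hb)
    by_cases hfin : B.Finite
    · -- finite case
      have hex : ∃ w ∈ W, w ≠ c₀ := by
        by_contra hcon
        push_neg at hcon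
        obtain ⟨w, hw⟩ := hWne
        have hsub : {m : X | c₀ < m} ⊆ B := by
          intro m hm
          exact hE3 c₀ hc₀C m hm (fun w' hw' => (hcon w' hw') ▸ hm)
        exact (hX.j2 c₀ (hA1 hc₀A)) (hfin.subset hsub)
      obtain ⟨w₀, hw₀W, hw₀ne⟩ := hex
      refine ⟨insert c₀ W, insert_subset hc₀A hWA, ?_⟩
      have hKlvl : insert c₀ W ⊆ level X 1 :=
        insert_subset (hA1 hc₀A) (hWA.trans hA1)
      have hub : upperBounds (insert c₀ W) = B := by
        ext m
        constructor
        · intro hm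
          have hstrict := strict_above_of_ub hKlvl (mem_insert c₀ W)
            (mem_insert_of_mem _ hw₀W) (Ne.symm hw₀ne) hm
          exact hE3 c₀ hc₀C m (hstrict c₀ (mem_insert _ _))
            (fun w hw => hstrict w (mem_insert_of_mem _ hw))
        · intro hb k hk
          rcases hk with rfl | hk
          · exact (hc₀B m hb).le
          · exact (hWB k hk m hb).le
      exact (mub_eq_of_ub_eq hB2 hub).symm
    · -- B infinite: special case, contradiction
      exfalso
      rcases hcase with ⟨-, -, hBfin, -⟩ | ⟨x, hx1, hAx, hBx⟩
      · exact hfin hBfin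
      · rw [hAx] at hCA
        rcases subset_singleton_iff_eq.mp hCA.subset with h | h
        · rw [h] at hc₀C; exact hc₀C
        · exact hCA.ne h
  · rintro ⟨K, hKA, hBK⟩
    rcases hcase with ⟨hAfin, hAne, hBfin, hBne⟩ | ⟨x, hx1, hAx, hBx⟩
    · -- finite case
      obtain ⟨b₀, hb₀B⟩ := hBne
      have hKlvl : K ⊆ level X 1 := hKA.trans hA1
      have hKnt : ∃ k₁ ∈ K, ∃ k₂ ∈ K, k₁ ≠ k₂ := by
        by_contra hcon
        push_neg at hcon
        have hss : Set.Subsingleton K := fun u hu v hv => hcon u hu v hv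
        have hb₀ : b₀ ∈ mub X K := hBK ▸ hb₀B
        rcases hss.eq_empty_or_singleton with rfl | ⟨k, rfl⟩
        · obtain ⟨-, hmin⟩ := hb₀
          have hmin' : IsMin b₀ := by
            intro y hy
            by_contra hny
            exact hmin y (fun z hz => absurd hz (notMem_empty z))
              (lt_of_le_not_ge hy hny)
          have h0 : Order.height b₀ = 0 := Order.height_eq_zero.mpr hmin'
          have h2 : Order.height b₀ = 2 := hB2 hb₀B
          rw [h0] at h2
          exact absurd h2 (by decide)
        · obtain ⟨hub, hmin⟩ := hb₀
          have hk : k ≤ b₀ := hub (mem_singleton k)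
          rcases hk.lt_or_eq with h | h
          · exact hmin k (fun z hz => mem_singleton_iff.mp hz ▸ le_refl k) h
          · have h1 : Order.height k = 1 := hKlvl (mem_singleton k)
            have h2 : Order.height b₀ = 2 := hB2 hb₀B
            rw [h] at h1
            rw [h1] at h2
            exact absurd h2 (by decide)
      obtain ⟨k₁, hk₁, k₂, hk₂, hne12⟩ := hKnt
      have hkltb : ∀ b ∈ B, ∀ k ∈ K, k < b := by
        intro b hb k hk
        have hbub : b ∈ upperBounds K := (show b ∈ mub X K from hBK ▸ hb).1
        exact strict_above_of_ub hKlvl hk₁ hk₂ hne12 hbub k hk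
      have hCne : {k₁} ≠ A := by
        intro h
        have : k₂ ∈ ({k₁} : Set X) := h ▸ hKA hk₂
        exact hne12 (mem_singleton_iff.mp this).symm
      refine ⟨{k₁}, B, ?_, ?_⟩
      · exact ⟨singleton_subset_iff.mpr (hA1 (hKA hk₁)), hB2,
          Or.inl ⟨finite_singleton k₁, singleton_nonempty k₁, hBfin, ⟨b₀, hb₀B⟩⟩,
          k₁, mem_singleton k₁, fun b hb => hkltb b hb k₁ hk₁⟩
      · refine ⟨Or.inr ⟨K, ?_, le_refl B, hKA, ⟨k₁, hk₁⟩,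
          fun w hw d hd => hkltb d hd w hw, ?_⟩, fun h => hCne h.1⟩
        · exact ⟨singleton_subset_iff.mpr (hKA hk₁), fun h => hCne (subset_antisymm (singleton_subset_iff.mpr (hKA hk₁)) h)⟩
        · intro a ha m ham hwm
          rw [hBK]
          refine ⟨fun k hk => (hwm k hk).le, ?_⟩
          intro y hy hym
          have hy' : k₁ < y := strict_above_of_ub hKlvl hk₁ hk₂ hne12 hy k₁ hk₁
          have h2 : y ∈ level X 2 := level2_of_level1_lt hX.dim2 (hA1 (hKA hk₁)) hy'
          have h3 : Order.height y < Order.height m :=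
            Order.height_strictMono hym
              (by rw [show Order.height y = 2 from h2]; decide)
          rw [show Order.height y = 2 from h2] at h3
          exact absurd (h3.trans_le (height_le_two hX.dim2 m)) (by decide)
    · -- special case: RHS is impossible
      exfalso
      have hBall : B = {z : X | x < z} := by
        rw [hBx]
        ext z
        simp only [mem_setOf_eq, mem_sep_iff]
        exact ⟨fun h => h.2, fun h => ⟨level2_of_level1_lt hX.dim2 hx1 h, h⟩⟩
      have hBinf : B.Infinite := hBall ▸ hX.j2 x hx1
      rcases subset_singleton_iff_eq.mp (hAx ▸ hKA) with rfl | rfl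
      · obtain ⟨m₀, hm₀, huniq⟩ := hX.uniqueMin
        have hsub : mub X (∅ : Set X) ⊆ {m₀} := by
          rintro z ⟨-, hmin⟩
          have : IsMin z := by
            intro y hy
            by_contra hny
            exact hmin y (fun u hu => absurd hu (notMem_empty u))
              (lt_of_le_not_ge hy hny)
          exact mem_singleton_iff.mpr (huniq z this)
        exact hBinf (hBK ▸ ((finite_singleton m₀).subset hsub))
      · exact hBinf (hBK ▸ hX.mubFinite {x} (singleton_nonempty x))
end

section
/- Let X be a J-poset, let B ⊆ X₂ be finite and nonempty, and let (A,B) ∈ (Str X)_B with height_B(A,B) > 0. Then the number of elements of (Str X)_B that are ≤ (A,B) equals (2^{ℓ(A,B)} − 1) · 2^{η(A,B)}. -/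
open Order Set

/-- Number of subsets of a finite set, as an `ncard` of a set of sets. -/
lemma ncard_subsets_aux {X : Type*} (s : Set X) (hs : s.Finite) :
    {C : Set X | C ⊆ s}.ncard = 2 ^ s.ncard := by
  classical
  have himg : {C : Set X | C ⊆ s} = ((↑) : Finset X → Set X) '' ↑hs.toFinset.powerset := by
    ext C
    simp only [Set.mem_setOf_eq, Set.mem_image, Finset.mem_coe, Finset.mem_powerset]
    constructor
    · intro hC
      have hCf : C.Finite := hs.subset hC
      refine ⟨hCf.toFinset, ?_, hCf.coe_toFinset⟩
      intro x hx
      simp only [Set.Finite.mem_toFinset] at hx ⊢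
      exact hC hx
    · rintro ⟨t, ht, rfl⟩
      intro x hx
      have := ht hx
      simpa using this
  rw [himg, Set.ncard_image_of_injective _ Finset.coe_injective, Set.ncard_coe_finset,
    Finset.card_powerset, Set.ncard_eq_toFinset_card s hs]

/-- If `B ⊆ X₂` is finite and nonempty and `(A,B) ∈ (Str X)_B` has height
greater than `0` in `(Str X)_B`, then the number of elements of `(Str X)_B` below `(A,B)`
equals `(2^{ℓ(A,B)} - 1) * 2^{η(A,B)}`. -/
theorem stmt_8 {X : Type*} [PartialOrder X] (hX : IsJPoset X)
    (B : Set X) (hB2 : B ⊆ level X 2) (hBf : B.Finite) (hBne : B.Nonempty)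
    (A : Set X) (hAB : StrMem X A B)
    (hpos : ∃ C : Set X, StrMem X C B ∧ StrLT X C B A B) :
    {C : Set X | StrMem X C B ∧ StrLE X C B A B}.ncard
      = (2 ^ ell X A B - 1) * 2 ^ eta X A B := by
  classical
  -- Notation
  set L : Set X := {a ∈ A | ∀ b ∈ B, a < b} with hL
  have hLA : L ⊆ A := fun a ha => ha.1
  -- A is finite
  have hAf : A.Finite := by
    rcases hAB.2.2.1 with h | ⟨x, _, rfl, _⟩
    · exact h.1
    · exact Set.finite_singleton x
  have hLf : L.Finite := hAf.subset hLA
  -- Extract a universal witness W from hpos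
  obtain ⟨C₀, hC₀mem, hC₀le, hC₀ne⟩ := hpos
  have hC₀A : C₀ ≠ A := fun h => hC₀ne ⟨h, rfl⟩
  have hdom : ∃ W : Set X, Dominates X A B C₀ B W := by
    rcases hC₀le with ⟨h, _⟩ | h
    · exact absurd h hC₀A
    · exact h
  obtain ⟨W₀, hC₀ssA, _, hW₀A, hW₀ne, hW₀B, hE3₀⟩ := hdom
  obtain ⟨a₀, ha₀C₀, ha₀B⟩ := hC₀mem.2.2.2
  set W : Set X := insert a₀ W₀ with hWdef
  have hWA : W ⊆ A := Set.insert_subset (hC₀ssA.subset ha₀C₀) hW₀A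
  have hWB : ∀ w ∈ W, ∀ d ∈ B, w < d := by
    rintro w hw d hd
    rcases hw with rfl | hw
    · exact ha₀B d hd
    · exact hW₀B w hw d hd
  have HW : ∀ m : X, (∀ w ∈ W, w < m) → m ∈ B := by
    intro m hm
    exact hE3₀ a₀ ha₀C₀ m (hm a₀ (Set.mem_insert _ _))
      (fun w hw => hm w (Set.mem_insert_of_mem _ hw))
  -- The set of lower elements is exactly the subsets of A meeting L
  have hset : {C : Set X | StrMem X C B ∧ StrLE X C B A B}
      = {C : Set X | C ⊆ A} \ {C : Set X | C ⊆ A \ L} := by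
    ext C
    simp only [Set.mem_setOf_eq, Set.mem_diff]
    constructor
    · rintro ⟨hCmem, hCle⟩
      have hCA : C ⊆ A := by
        rcases hCle with ⟨rfl, _⟩ | ⟨W', hW'⟩
        · exact subset_rfl
        · exact hW'.1.subset
      refine ⟨hCA, ?_⟩
      obtain ⟨a, haC, haB⟩ := hCmem.2.2.2
      intro hsub
      exact (hsub haC).2 ⟨hCA haC, haB⟩
    · rintro ⟨hCA, hnsub⟩
      obtain ⟨a, haC, haL⟩ : ∃ a ∈ C, a ∈ L := by
        by_contra h
        push_neg at h
        exact hnsub fun x hx => ⟨hCA hx, fun hxL => h x hx hxL⟩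
      have hCmem : StrMem X C B := by
        refine ⟨hCA.trans hAB.1, hB2, Or.inl ⟨hAf.subset hCA, ⟨a, haC⟩, hBf, hBne⟩,
          ⟨a, haC, haL.2⟩⟩
      refine ⟨hCmem, ?_⟩
      by_cases hCeq : C = A
      · exact Or.inl ⟨hCeq, rfl⟩
      · refine Or.inr ⟨W, ⟨hCA.ssubset_of_ne hCeq, subset_rfl, hWA,
          ⟨a₀, Set.mem_insert _ _⟩, hWB, ?_⟩⟩
        intro x _ m _ hWm
        exact HW m hWm
  -- Counting
  have hsub2 : {C : Set X | C ⊆ A \ L} ⊆ {C : Set X | C ⊆ A} :=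
    fun C hC => hC.trans Set.diff_subset
  have hbigf : {C : Set X | C ⊆ A}.Finite := Set.Finite.finite_subsets hAf
  have hncL : ell X A B = L.ncard := rfl
  have hLle : L.ncard ≤ A.ncard := Set.ncard_le_ncard hLA hAf
  have heta : eta X A B = A.ncard - L.ncard := rfl
  have hdiffcard : (A \ L).ncard = A.ncard - L.ncard := Set.ncard_diff hLA hLf
  rw [hset, Set.ncard_diff hsub2 (hbigf.subset hsub2), ncard_subsets_aux A hAf,
    ncard_subsets_aux (A \ L) hAf.diff, hdiffcard, hncL, heta]
  rw [Nat.sub_mul, one_mul, ← pow_add, Nat.add_sub_cancel' hLle]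
end

section
/- Let X be a J-poset, let B ⊆ X₂ be finite and nonempty, and let (A,B) ∈ (Str X)_B with height_B(A,B) > 0. Then B = mub(A) if and only if the number of elements of (Str X)_B that are ≤ (A,B) is odd. -/
open Order Set

/-- If `B ⊆ X₂` is finite and nonempty and `(A,B) ∈ (Str X)_B` has height
greater than `0` in `(Str X)_B`, then `B = mub A` iff the number of elements of
`(Str X)_B` below `(A,B)` is odd. -/
theorem stmt_9 {X : Type*} [PartialOrder X] (hX : IsJPoset X)
    (B : Set X) (hB2 : B ⊆ level X 2) (hBf : B.Finite) (hBne : B.Nonempty)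
    (A : Set X) (hAB : StrMem X A B)
    (hpos : ∃ C : Set X, StrMem X C B ∧ StrLT X C B A B) :
    B = mub X A ↔ Odd ({C : Set X | StrMem X C B ∧ StrLE X C B A B}.ncard) := by
  classical
  obtain ⟨hA1, _, hdisj, a0, ha0A, ha0B⟩ := hAB
  -- `A` is finite
  have hAfin : A.Finite := by
    rcases hdisj with ⟨h, _⟩ | ⟨x, _, hx, _⟩
    · exact h
    · rw [hx]; exact Set.finite_singleton x
  -- two height-1 elements are incomparable
  have h11 : ∀ x ∈ level X 1, ∀ y ∈ level X 1, ¬ x < y := by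
    intro x hx y hy hxy
    have hx' : Order.height x = ((1 : ℕ) : ℕ∞) := hx
    have hy' : Order.height y = ((1 : ℕ) : ℕ∞) := hy
    have hfin : Order.height x < ⊤ := by rw [hx']; exact ENat.coe_lt_top 1
    have := Order.height_strictMono hxy hfin
    rw [hx', hy'] at this
    exact lt_irrefl _ this
  -- two height-2 elements are incomparable
  have h22 : ∀ x ∈ level X 2, ∀ y ∈ level X 2, ¬ x < y := by
    intro x hx y hy hxy
    have hx' : Order.height x = ((2 : ℕ) : ℕ∞) := hx
    have hy' : Order.height y = ((2 : ℕ) : ℕ∞) := hy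
    have hfin : Order.height x < ⊤ := by rw [hx']; exact ENat.coe_lt_top 2
    have := Order.height_strictMono hxy hfin
    rw [hx', hy'] at this
    exact lt_irrefl _ this
  -- a height-1 element is never a height-2 element
  have h12 : ∀ x ∈ level X 1, ∀ y ∈ level X 2, x ≠ y := by
    intro x hx y hy he
    have hx' : Order.height x = ((1 : ℕ) : ℕ∞) := hx
    have hy' : Order.height y = ((2 : ℕ) : ℕ∞) := hy
    rw [he, hy'] at hx'
    exact absurd (Nat.cast_injective hx') (by norm_num)
  set L : Set X := {a ∈ A | ∀ b ∈ B, a < b} with hLdef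
  have ha0L : a0 ∈ L := ⟨ha0A, ha0B⟩
  -- extract the strictly smaller element
  obtain ⟨C₀, hC₀m, hC₀le, hC₀ne⟩ := hpos
  have hC₀ne' : C₀ ≠ A := fun h => hC₀ne ⟨h, rfl⟩
  rcases hC₀le with ⟨h, _⟩ | ⟨W, hC₀A, _, hWA, hWne, hWlt, hE3⟩
  · exact absurd h hC₀ne'
  have hWL : W ⊆ L := fun w hw => ⟨hWA hw, fun b hb => hWlt w hw b hb⟩
  obtain ⟨c0, hc0C, hc0B⟩ := hC₀m.2.2.2
  have hc0A : c0 ∈ A := hC₀A.subset hc0C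
  have hc0L : c0 ∈ L := ⟨hc0A, hc0B⟩
  -- every common strict upper bound of `L` lies in `B`
  have hsub : ∀ m : X, (∀ w ∈ L, w < m) → m ∈ B := by
    intro m hm
    exact hE3 c0 hc0C m (hm c0 hc0L) (fun w hw => hm w (hWL hw))
  -- `A` has at least two elements
  have hA2 : ∃ x ∈ A, ∃ y ∈ A, x ≠ y := by
    obtain ⟨y, hyA, hyC⟩ := Set.exists_of_ssubset hC₀A
    exact ⟨c0, hc0A, y, hyA, fun h => hyC (h ▸ hc0C)⟩
  -- characterize the down-set
  have hS : {C : Set X | StrMem X C B ∧ StrLE X C B A B}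
      = {C : Set X | C ⊆ A ∧ (C ∩ L).Nonempty} := by
    ext C
    simp only [Set.mem_setOf_eq]
    constructor
    · rintro ⟨⟨hC1, _, _, c, hcC, hcB⟩, hle⟩
      rcases hle with ⟨rfl, _⟩ | ⟨W', hdom⟩
      · exact ⟨subset_rfl, a0, ha0A, ha0L⟩
      · exact ⟨hdom.1.subset, c, hcC, hdom.1.subset hcC, hcB⟩
    · rintro ⟨hCA, c, hcC, hcL⟩
      refine ⟨⟨hCA.trans hA1, hB2,
        Or.inl ⟨hAfin.subset hCA, ⟨c, hcC⟩, hBf, hBne⟩, c, hcC, hcL.2⟩, ?_⟩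
      by_cases hCe : C = A
      · exact Or.inl ⟨hCe, rfl⟩
      · exact Or.inr ⟨L, ssubset_iff_subset_ne.mpr ⟨hCA, hCe⟩, subset_rfl,
          Set.sep_subset _ _, ⟨a0, ha0L⟩, fun w hw d hd => hw.2 d hd,
          fun a _ m _ hm => hsub m hm⟩
  -- move to finsets for counting
  set a : Finset X := hAfin.toFinset with hadef
  set l : Finset X := a.filter (fun x => ∀ b ∈ B, x < b) with hldef
  have hmem_a : ∀ x, x ∈ a ↔ x ∈ A := fun x => hAfin.mem_toFinset
  have hmem_l : ∀ x, x ∈ l ↔ x ∈ L := by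
    intro x
    rw [hldef, Finset.mem_filter, hmem_a]
    exact Iff.rfl
  set T : Finset (Finset X) := a.powerset.filter (fun s => (s ∩ l).Nonempty) with hTdef
  have him : {C : Set X | C ⊆ A ∧ (C ∩ L).Nonempty}
      = ((↑) : Finset X → Set X) '' ↑T := by
    ext C
    simp only [Set.mem_setOf_eq, Set.mem_image, Finset.mem_coe, hTdef,
      Finset.mem_filter, Finset.mem_powerset]
    constructor
    · rintro ⟨hCA, c, hcC, hcL⟩
      have hCfin : C.Finite := hAfin.subset hCA
      refine ⟨hCfin.toFinset, ⟨?_, ⟨c, Finset.mem_inter.mpr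
        ⟨hCfin.mem_toFinset.mpr hcC, (hmem_l c).mpr hcL⟩⟩⟩, hCfin.coe_toFinset⟩
      intro x hx
      exact (hmem_a x).mpr (hCA (hCfin.mem_toFinset.mp hx))
    · rintro ⟨s, ⟨hsa, c, hc⟩, rfl⟩
      obtain ⟨hcs, hcl⟩ := Finset.mem_inter.mp hc
      exact ⟨fun x hx => (hmem_a x).mp (hsa hx), c, hcs, (hmem_l c).mp hcl⟩
  have hcount : {C : Set X | C ⊆ A ∧ (C ∩ L).Nonempty}.ncard = T.card := by
    rw [him, Set.ncard_image_of_injective _ Finset.coe_injective, Set.ncard_coe_finset]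
  -- compute the cardinality of T
  have hT : T = a.powerset \ (a \ l).powerset := by
    ext s
    simp only [hTdef, Finset.mem_filter, Finset.mem_powerset, Finset.mem_sdiff]
    constructor
    · rintro ⟨hsa, c, hc⟩
      obtain ⟨hcs, hcl⟩ := Finset.mem_inter.mp hc
      refine ⟨hsa, fun hsal => ?_⟩
      exact (Finset.mem_sdiff.mp (hsal hcs)).2 hcl
    · rintro ⟨hsa, hns⟩
      obtain ⟨c, hcs, hcal⟩ := Finset.not_subset.mp hns
      refine ⟨hsa, c, Finset.mem_inter.mpr ⟨hcs, ?_⟩⟩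
      by_contra hcl
      exact hcal (Finset.mem_sdiff.mpr ⟨hsa hcs, hcl⟩)
  have hpow : (a \ l).powerset ⊆ a.powerset :=
    Finset.powerset_mono.mpr (Finset.sdiff_subset)
  have hTcard : T.card = 2 ^ a.card - 2 ^ (a \ l).card := by
    rw [hT, Finset.card_sdiff_of_subset hpow, Finset.card_powerset, Finset.card_powerset]
  have ha0a : a0 ∈ a := (hmem_a a0).mpr ha0A
  have hnpos : a.card ≠ 0 := by
    have : 0 < a.card := Finset.card_pos.mpr ⟨a0, ha0a⟩
    omega
  have hmle : (a \ l).card ≤ a.card := Finset.card_le_card Finset.sdiff_subset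
  -- parity criterion
  have hodd : Odd (2 ^ a.card - 2 ^ (a \ l).card) ↔ (a \ l).card = 0 := by
    have hle : 2 ^ (a \ l).card ≤ 2 ^ a.card := Nat.pow_le_pow_right (by norm_num) hmle
    rw [← Nat.not_even_iff_odd, Nat.even_sub hle, Nat.even_pow, Nat.even_pow]
    simp [hnpos]
  -- `(a \ l).card = 0` means all of `A` lies below all of `B`
  have hm0 : (a \ l).card = 0 ↔ ∀ x ∈ A, ∀ b ∈ B, x < b := by
    rw [Finset.card_eq_zero, Finset.sdiff_eq_empty_iff_subset]
    constructor
    · intro h x hxA b hbB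
      have := (hmem_l x).mp (h ((hmem_a x).mpr hxA))
      exact this.2 b hbB
    · intro h x hx
      exact (hmem_l x).mpr ⟨(hmem_a x).mp hx, h x ((hmem_a x).mp hx)⟩
  -- main equivalence
  have hfinal : B = mub X A ↔ ∀ x ∈ A, ∀ b ∈ B, x < b := by
    constructor
    · intro h x hx b hb
      have hb' : b ∈ mub X A := h ▸ hb
      exact lt_of_le_of_ne (hb'.1 hx) (fun he => h12 x (hA1 hx) b (hB2 hb) he)
    · intro h
      have hub : upperBounds A = B := by
        ext m
        constructor
        · intro hm
          have hmA : m ∉ A := by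
            intro hmA
            obtain ⟨x, hx, y, hy, hxy⟩ := hA2
            rcases eq_or_ne x m with rfl | hxm
            · exact h11 y (hA1 hy) x (hA1 hmA)
                (lt_of_le_of_ne (hm hy) (fun he => hxy he.symm))
            · exact h11 x (hA1 hx) m (hA1 hmA) (lt_of_le_of_ne (hm hx) hxm)
          exact hsub m (fun w hw =>
            lt_of_le_of_ne (hm hw.1) (fun he => hmA (he ▸ hw.1)))
        · intro hm x hx
          exact (h x hx m hm).le
      ext b
      constructor
      · intro hb
        refine ⟨?_, ?_⟩
        · rw [hub]; exact hb
        · intro y hy hlt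
          rw [hub] at hy
          exact h22 y (hB2 hy) b (hB2 hb) hlt
      · rintro ⟨hbu, _⟩
        rw [hub] at hbu
        exact hbu
  rw [hS, hcount, hTcard, hodd, hm0]
  exact hfinal
end

section
/- Let X be a J-poset, let B ⊆ X₂ be finite and nonempty, and let (A,B) ∈ (Str X)_B. Then the set of elements of (Str X)_B that are ≤ (A,B), with the order inherited from Str X, is order-isomorphic to the poset 𝕀₂ (two incomparable minimal elements both below a single top element) if and only if A = {a,b} for two distinct elements a, b ∈ X₁ and B = mub(A). -/
open Order Set

section Aux

variable {X : Type*} [PartialOrder X]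

lemma height_of_level1 {x : X} (h : x ∈ level X 1) : Order.height x = 1 := by
  have : Order.height x = ((1 : ℕ) : ℕ∞) := h
  simpa using this

lemma height_of_level2 {x : X} (h : x ∈ level X 2) : Order.height x = 2 := by
  have : Order.height x = ((2 : ℕ) : ℕ∞) := h
  simpa using this

lemma chain3_absurd {a y m : X} (ha : Order.height a = 1) (hm : Order.height m ≤ 2)
    (h1 : a < y) (h2 : y < m) : False := by
  have hta : Order.height a < ⊤ := by rw [ha]; exact lt_top_iff_ne_top.mpr (by simp)
  have hy : 1 < Order.height y := ha ▸ Order.height_strictMono h1 hta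
  have hym : Order.height y ≤ 2 := le_trans (Order.height_mono h2.le) hm
  have hty : Order.height y < ⊤ := lt_of_le_of_lt hym (lt_top_iff_ne_top.mpr (by simp))
  have hy2 : Order.height y < Order.height m := Order.height_strictMono h2 hty
  have hlt2 : Order.height y < 2 := lt_of_lt_of_le hy2 hm
  have h2le : (2 : ℕ∞) ≤ Order.height y := by
    have := Order.add_one_le_of_lt hy
    rwa [one_add_one_eq_two] at this
  exact absurd hlt2 (not_lt.mpr h2le)

lemma pair_not_le {a b : X} (ha : a ∈ level X 1) (hb : b ∈ level X 1) (hab : b ≠ a) :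
    ¬ b ≤ a := by
  intro h
  have hlt : b < a := h.lt_of_ne hab
  have htb : Order.height b < ⊤ := by
    rw [height_of_level1 hb]; exact lt_top_iff_ne_top.mpr (by simp)
  have := Order.height_strictMono hlt htb
  rw [height_of_level1 hb, height_of_level1 ha] at this
  exact absurd this (lt_irrefl _)

lemma mem_mub_pair {a b m : X} (ha : a ∈ level X 1) (hb : b ∈ level X 1) (hab : a ≠ b)
    (hm2 : Order.height m ≤ 2) (ham : a < m) (hbm : b < m) : m ∈ mub X {a, b} := by
  constructor
  · rintro x (rfl | rfl)
    · exact ham.le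
    · exact hbm.le
  · intro y hy hym
    have hay : a ≤ y := hy (by simp)
    have hby : b ≤ y := hy (by simp)
    rcases eq_or_lt_of_le hay with rfl | hlt
    · exact pair_not_le ha hb (Ne.symm hab) hby
    · exact chain3_absurd (height_of_level1 ha) hm2 hlt hym

lemma A_finite {A B : Set X} (hAB : StrMem X A B) : A.Finite := by
  rcases hAB.2.2.1 with ⟨hf, _⟩ | ⟨x, _, hA, _⟩
  · exact hf
  · rw [hA]; exact Set.finite_singleton x

/-- Membership in the lower set. -/
lemma mem_S {A B C : Set X} (hAB : StrMem X A B) (hBf : B.Finite) (hBne : B.Nonempty)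
    (hC : C ⊆ {x ∈ A | ∀ b ∈ B, x < b}) (hne : C.Nonempty) (hss : C ⊂ A)
    (hQ : ∀ m, (∀ l ∈ {x ∈ A | ∀ b ∈ B, x < b}, l < m) → m ∈ B) :
    StrMem X C B ∧ StrLE X C B A B := by
  obtain ⟨c, hc⟩ := hne
  constructor
  · exact ⟨fun x hx => hAB.1 (hC hx).1, hAB.2.1,
      Or.inl ⟨(A_finite hAB).subset hss.1, ⟨c, hc⟩, hBf, hBne⟩,
      ⟨c, hc, (hC hc).2⟩⟩
  · refine Or.inr ⟨{x ∈ A | ∀ b ∈ B, x < b}, hss, subset_rfl,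
      fun l hl => hl.1, ⟨c, hC hc⟩, fun w hw d hd => hw.2 d hd,
      fun x hx m hxm hWm => hQ m hWm⟩

lemma I2_cases (s : Set (Fin 2)) (hs : s.Nonempty) : s = {0} ∨ s = {1} ∨ s = Set.univ := by
  by_cases h0 : (0 : Fin 2) ∈ s <;> by_cases h1 : (1 : Fin 2) ∈ s
  · right; right; ext x; fin_cases x <;> simp [h0, h1]
  · left; ext x; fin_cases x <;> simp [h0, h1]
  · right; left; ext x; fin_cases x <;> simp [h0, h1]
  · exfalso; obtain ⟨x, hx⟩ := hs; fin_cases x <;> tauto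

lemma pigeon4 {α : Type*} {a b c x y z w : α}
    (hx : x = a ∨ x = b ∨ x = c) (hy : y = a ∨ y = b ∨ y = c)
    (hz : z = a ∨ z = b ∨ z = c) (hw : w = a ∨ w = b ∨ w = c)
    (h1 : x ≠ y) (h2 : x ≠ z) (h3 : x ≠ w) (h4 : y ≠ z) (h5 : y ≠ w) (h6 : z ≠ w) : False := by
  rcases hx with rfl | rfl | rfl <;> rcases hy with rfl | rfl | rfl <;>
    rcases hz with rfl | rfl | rfl <;> rcases hw with rfl | rfl | rfl <;> simp_all

def i0 : I2 := ⟨{0}, ⟨0, rfl⟩⟩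
def i1 : I2 := ⟨{1}, ⟨1, rfl⟩⟩
def itop : I2 := ⟨Set.univ, ⟨0, trivial⟩⟩

lemma I2_le_iff (s t : I2) : s ≤ t ↔ s.1 ⊆ t.1 := Iff.rfl

lemma ne_of_level12 {x y : X} (hx : x ∈ level X 1) (hy : y ∈ level X 2) : x ≠ y := by
  rintro rfl
  have h1 : Order.height x = ((1 : ℕ) : ℕ∞) := hx
  have h2 : Order.height x = ((2 : ℕ) : ℕ∞) := hy
  rw [h1] at h2
  exact absurd (Nat.cast_injective h2) (by norm_num)

lemma i0_ne_i1 : i0 ≠ i1 := by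
  intro h
  have : ({0} : Set (Fin 2)) = {1} := congrArg Subtype.val h
  have h0 : (0 : Fin 2) ∈ ({1} : Set (Fin 2)) := this ▸ rfl
  simpa using h0

lemma i0_ne_itop : i0 ≠ itop := by
  intro h
  have : ({0} : Set (Fin 2)) = Set.univ := congrArg Subtype.val h
  have h0 : (1 : Fin 2) ∈ ({0} : Set (Fin 2)) := this.symm ▸ trivial
  simpa using h0

lemma i1_ne_itop : i1 ≠ itop := by
  intro h
  have : ({1} : Set (Fin 2)) = Set.univ := congrArg Subtype.val h
  have h0 : (0 : Fin 2) ∈ ({1} : Set (Fin 2)) := this.symm ▸ trivial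
  simpa using h0

lemma i0_le_itop : i0 ≤ itop := fun _ _ => trivial
lemma i1_le_itop : i1 ≤ itop := fun _ _ => trivial
lemma not_i0_le_i1 : ¬ i0 ≤ i1 := by intro h; have := h (rfl : (0 : Fin 2) ∈ i0.1); simp [i1] at this
lemma not_i1_le_i0 : ¬ i1 ≤ i0 := by intro h; have := h (rfl : (1 : Fin 2) ∈ i1.1); simp [i0] at this
lemma not_itop_le_i0 : ¬ itop ≤ i0 := by
  intro h; have := h (a := (1 : Fin 2)) trivial; simp [i0] at this
lemma not_itop_le_i1 : ¬ itop ≤ i1 := by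
  intro h; have := h (a := (0 : Fin 2)) trivial; simp [i1] at this

end Aux

/-- For `(A,B) ∈ (Str X)_B` with `B ⊆ X₂` finite nonempty, the set of elements
of `(Str X)_B` below `(A,B)`, with the inherited order, is order-isomorphic to `𝕀₂` iff
`A = {a, b}` for distinct `a, b ∈ X₁` and `B = mub A`. -/
theorem stmt_10 {X : Type*} [PartialOrder X] (hX : IsJPoset X)
    (B : Set X) (hB2 : B ⊆ level X 2) (hBf : B.Finite) (hBne : B.Nonempty)
    (A : Set X) (hAB : StrMem X A B) :
    (∃ f : {C : Set X // StrMem X C B ∧ StrLE X C B A B} → I2,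
      Function.Bijective f ∧
      ∀ C C' : {C : Set X // StrMem X C B ∧ StrLE X C B A B},
        StrLE X C.1 B C'.1 B ↔ f C ≤ f C') ↔
    (∃ a b : X, a ≠ b ∧ a ∈ level X 1 ∧ b ∈ level X 1 ∧ A = {a, b} ∧ B = mub X A) := by
  classical
  constructor
  · -- forward direction
    rintro ⟨f, ⟨hinj, hsurj⟩, -⟩
    have hA1 : A ⊆ level X 1 := hAB.1
    set L : Set X := {x ∈ A | ∀ b ∈ B, x < b} with hLdef
    -- there is an element of the lower set whose first coordinate is not A
    obtain ⟨C0, hC0⟩ := hsurj i0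
    obtain ⟨C1, hC1⟩ := hsurj i1
    have hC01 : C0 ≠ C1 := by
      intro h; rw [h, hC1] at hC0; exact i0_ne_i1 hC0.symm
    obtain ⟨C, hCne⟩ :
        ∃ C : {C : Set X // StrMem X C B ∧ StrLE X C B A B}, C.1 ≠ A := by
      by_contra h; push_neg at h
      exact hC01 (Subtype.ext ((h C0).trans (h C1).symm))
    obtain ⟨W, hCA, -, hWA, hWne, hWB, hE3⟩ :
        ∃ W, Dominates X A B C.1 B W := by
      rcases C.2.2 with ⟨h, -⟩ | h
      · exact absurd h hCne
      · exact h
    have hWL : W ⊆ L := fun w hw => ⟨hWA hw, fun d hd => hWB w hw d hd⟩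
    obtain ⟨c0, hc0C, hc0B⟩ := C.2.1.2.2.2
    have hc0L : c0 ∈ L := ⟨hCA.1 hc0C, hc0B⟩
    have hQ : ∀ m, (∀ l ∈ L, l < m) → m ∈ B := fun m hm =>
      hE3 c0 hc0C m (hm c0 hc0L) (fun w hw => hm w (hWL hw))
    obtain ⟨l2, hl2L, hl2ne⟩ : ∃ l2 ∈ L, l2 ≠ c0 := by
      by_contra h; push_neg at h
      have hsub : {z | c0 < z} ⊆ B := fun m hm => hQ m (fun l hl => (h l hl) ▸ hm)
      exact ((hX.j2 c0 (hA1 hc0L.1)).mono hsub) hBf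
    by_cases hcase : ({c0, l2} : Set X) = A
    · refine ⟨c0, l2, Ne.symm hl2ne, hA1 hc0L.1, hA1 hl2L.1, hcase.symm, ?_⟩
      ext m
      constructor
      · intro hm
        rw [← hcase]
        exact mem_mub_pair (hA1 hc0L.1) (hA1 hl2L.1) (Ne.symm hl2ne)
          (le_of_eq (height_of_level2 (hB2 hm))) (hc0L.2 m hm) (hl2L.2 m hm)
      · intro hm
        obtain ⟨hub, -⟩ := hm
        have h1 : c0 ≤ m := hub (by rw [← hcase]; simp)
        have h2 : l2 ≤ m := hub (by rw [← hcase]; simp)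
        have hmA : m ∉ A := by
          intro hmem
          rw [← hcase] at hmem
          rcases hmem with rfl | rfl
          · exact pair_not_le (hA1 hc0L.1) (hA1 hl2L.1) hl2ne h2
          · exact pair_not_le (hA1 hl2L.1) (hA1 hc0L.1) (Ne.symm hl2ne) h1
        apply hQ
        intro l hl
        exact (hub hl.1).lt_of_ne (fun h => hmA (h ▸ hl.1))
    · -- pigeonhole contradiction
      exfalso
      have hpairA : ({c0, l2} : Set X) ⊆ A := by
        rintro x (rfl | rfl)
        exacts [hc0L.1, hl2L.1]
      have hss : ({c0, l2} : Set X) ⊂ A := hpairA.ssubset_of_ne hcase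
      have hs1 : ({c0} : Set X) ⊂ A :=
        ssubset_of_subset_of_ssubset (Set.singleton_subset_iff.mpr (by simp)) hss
      have hs2 : ({l2} : Set X) ⊂ A :=
        ssubset_of_subset_of_ssubset (Set.singleton_subset_iff.mpr (by simp)) hss
      have hm3 := mem_S (C := {c0, l2}) hAB hBf hBne
        (by rintro x (rfl | rfl); exacts [hc0L, hl2L]) ⟨c0, by simp⟩ hss hQ
      have hm1 := mem_S (C := {c0}) hAB hBf hBne
        (Set.singleton_subset_iff.mpr hc0L) ⟨c0, rfl⟩ hs1 hQ
      have hm2 := mem_S (C := {l2}) hAB hBf hBne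
        (Set.singleton_subset_iff.mpr hl2L) ⟨l2, rfl⟩ hs2 hQ
      have d01 : A ≠ ({c0} : Set X) := hs1.ne.symm
      have d02 : A ≠ ({l2} : Set X) := hs2.ne.symm
      have d03 : A ≠ ({c0, l2} : Set X) := hss.ne.symm
      have d12 : ({c0} : Set X) ≠ {l2} := fun h => hl2ne (by simpa using h.symm)
      have d13 : ({c0} : Set X) ≠ {c0, l2} := fun h => by
        have : l2 ∈ ({c0} : Set X) := h.symm ▸ (by simp : l2 ∈ ({c0, l2} : Set X))
        exact hl2ne (by simpa using this)
      have d23 : ({l2} : Set X) ≠ {c0, l2} := fun h => by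
        have : c0 ∈ ({l2} : Set X) := h.symm ▸ (by simp : c0 ∈ ({c0, l2} : Set X))
        exact hl2ne (by simpa using this.symm)
      have key : ∀ (u v : {C : Set X // StrMem X C B ∧ StrLE X C B A B}),
          u.1 ≠ v.1 → (f u).1 ≠ (f v).1 := fun u v huv hv =>
        huv (congrArg Subtype.val (hinj (Subtype.ext hv)))
      let e0 : {C : Set X // StrMem X C B ∧ StrLE X C B A B} := ⟨A, hAB, Or.inl ⟨rfl, rfl⟩⟩
      let e1 : {C : Set X // StrMem X C B ∧ StrLE X C B A B} := ⟨{c0}, hm1⟩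
      let e2 : {C : Set X // StrMem X C B ∧ StrLE X C B A B} := ⟨{l2}, hm2⟩
      let e3 : {C : Set X // StrMem X C B ∧ StrLE X C B A B} := ⟨{c0, l2}, hm3⟩
      exact pigeon4 (I2_cases _ (f e0).2) (I2_cases _ (f e1).2)
        (I2_cases _ (f e2).2) (I2_cases _ (f e3).2)
        (key e0 e1 d01) (key e0 e2 d02) (key e0 e3 d03)
        (key e1 e2 d12) (key e1 e3 d13) (key e2 e3 d23)
  · -- backward direction
    rintro ⟨a, b, hab, ha1, hb1, rfl, hBm⟩
    have hm2 : ∀ m : X, Order.height m ≤ 2 := fun m => by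
      have h := Order.height_le_krullDim m
      rw [hX.dim2] at h
      exact WithBot.coe_le_coe.mp h
    have hmemB : ∀ m, a < m → b < m → m ∈ B := fun m h1 h2 => by
      rw [hBm]; exact mem_mub_pair ha1 hb1 hab (hm2 m) h1 h2
    have hBlt : ∀ m ∈ B, a < m ∧ b < m := by
      intro m hm
      have hub : m ∈ upperBounds ({a, b} : Set X) := by rw [hBm] at hm; exact hm.1
      exact ⟨(hub (by simp)).lt_of_ne (ne_of_level12 ha1 (hB2 hm)),
        (hub (by simp)).lt_of_ne (ne_of_level12 hb1 (hB2 hm))⟩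
    have hne_ab : ({a} : Set X) ≠ {b} := fun h => hab (by simpa using h)
    have hne_aA : ({a} : Set X) ≠ {a, b} := fun h => by
      have : b ∈ ({a} : Set X) := h.symm ▸ (by simp : b ∈ ({a, b} : Set X))
      exact hab (by simpa using this.symm)
    have hne_bA : ({b} : Set X) ≠ {a, b} := fun h => by
      have : a ∈ ({b} : Set X) := h.symm ▸ (by simp : a ∈ ({a, b} : Set X))
      exact hab (by simpa using this)
    have hSa : StrMem X {a} B ∧ StrLE X {a} B ({a, b} : Set X) B := by
      refine ⟨⟨Set.singleton_subset_iff.mpr ha1, hAB.2.1,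
        Or.inl ⟨Set.finite_singleton a, Set.singleton_nonempty a, hBf, hBne⟩,
        ⟨a, rfl, fun m hm => (hBlt m hm).1⟩⟩, ?_⟩
      refine Or.inr ⟨{a, b}, ⟨by simp, fun h => hne_aA (subset_antisymm (by simp) h)⟩,
        subset_rfl, subset_rfl, ⟨a, by simp⟩, ?_, ?_⟩
      · rintro w (rfl | rfl) d hd
        exacts [(hBlt d hd).1, (hBlt d hd).2]
      · intro c hc m hcm hall
        exact hmemB m (hall a (by simp)) (hall b (by simp))
    have hSb : StrMem X {b} B ∧ StrLE X {b} B ({a, b} : Set X) B := by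
      refine ⟨⟨Set.singleton_subset_iff.mpr hb1, hAB.2.1,
        Or.inl ⟨Set.finite_singleton b, Set.singleton_nonempty b, hBf, hBne⟩,
        ⟨b, rfl, fun m hm => (hBlt m hm).2⟩⟩, ?_⟩
      refine Or.inr ⟨{a, b}, ⟨by simp, fun h => hne_bA (subset_antisymm (by simp) h)⟩,
        subset_rfl, subset_rfl, ⟨a, by simp⟩, ?_, ?_⟩
      · rintro w (rfl | rfl) d hd
        exacts [(hBlt d hd).1, (hBlt d hd).2]
      · intro c hc m hcm hall
        exact hmemB m (hall a (by simp)) (hall b (by simp))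
    have hSA : StrMem X ({a, b} : Set X) B ∧ StrLE X ({a, b} : Set X) B ({a, b} : Set X) B :=
      ⟨hAB, Or.inl ⟨rfl, rfl⟩⟩
    have hclass : ∀ C : {C : Set X // StrMem X C B ∧ StrLE X C B ({a, b} : Set X) B},
        C.1 = {a} ∨ C.1 = {b} ∨ C.1 = ({a, b} : Set X) := by
      intro C
      rcases C.2.2 with ⟨h, -⟩ | ⟨W, hss, -⟩
      · right; right; exact h
      · obtain ⟨c, hcC, -⟩ := C.2.1.2.2.2
        by_cases hain : a ∈ C.1 <;> by_cases hbin : b ∈ C.1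
        · exact absurd (hss.1.antisymm (by rintro x (rfl | rfl) <;> assumption)) hss.ne
        · left
          refine Set.eq_singleton_iff_unique_mem.mpr ⟨hain, fun x hx => ?_⟩
          rcases hss.1 hx with rfl | rfl
          · rfl
          · exact absurd hx hbin
        · right; left
          refine Set.eq_singleton_iff_unique_mem.mpr ⟨hbin, fun x hx => ?_⟩
          rcases hss.1 hx with rfl | rfl
          · exact absurd hx hain
          · rfl
        · rcases hss.1 hcC with rfl | rfl
          · exact absurd hcC hain
          · exact absurd hcC hbin
    have hnot : ∀ s t : Set X, s ≠ t → ¬ s ⊆ t → ¬ StrLE X s B t B := by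
      rintro s t hne hns (⟨h, -⟩ | ⟨W, hd⟩)
      · exact hne h
      · exact hns hd.1.1
    have hnot_ab : ¬ StrLE X {a} B {b} B :=
      hnot _ _ hne_ab (fun h => hab (by simpa using h rfl))
    have hnot_ba : ¬ StrLE X {b} B {a} B :=
      hnot _ _ hne_ab.symm (fun h => hab (by simpa using (h rfl).symm))
    have hnot_Aa : ¬ StrLE X ({a, b} : Set X) B {a} B :=
      hnot _ _ hne_aA.symm (fun h =>
        hab (by simpa using (h (by simp : b ∈ ({a, b} : Set X))).symm))
    have hnot_Ab : ¬ StrLE X ({a, b} : Set X) B {b} B :=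
      hnot _ _ hne_bA.symm (fun h =>
        hab (by simpa using h (by simp : a ∈ ({a, b} : Set X))))
    let f : {C : Set X // StrMem X C B ∧ StrLE X C B ({a, b} : Set X) B} → I2 :=
      fun C => if C.1 = {a} then i0 else if C.1 = {b} then i1 else itop
    have hf1 : ∀ C, C.1 = {a} → f C = i0 := by
      intro C hC; simp only [f]; rw [if_pos hC]
    have hf2 : ∀ C, C.1 = {b} → f C = i1 := by
      intro C hC; simp only [f]
      rw [if_neg (by rw [hC]; exact hne_ab.symm), if_pos hC]
    have hf3 : ∀ C, C.1 = ({a, b} : Set X) → f C = itop := by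
      intro C hC; simp only [f]
      rw [if_neg (by rw [hC]; exact hne_aA.symm), if_neg (by rw [hC]; exact hne_bA.symm)]
    refine ⟨f, ⟨?_, ?_⟩, ?_⟩
    · -- injectivity
      intro C C' h
      rcases hclass C with hC | hC | hC <;> rcases hclass C' with hC' | hC' | hC'
      · exact Subtype.ext (hC.trans hC'.symm)
      · rw [hf1 C hC, hf2 C' hC'] at h; exact absurd h i0_ne_i1
      · rw [hf1 C hC, hf3 C' hC'] at h; exact absurd h i0_ne_itop
      · rw [hf2 C hC, hf1 C' hC'] at h; exact absurd h.symm i0_ne_i1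
      · exact Subtype.ext (hC.trans hC'.symm)
      · rw [hf2 C hC, hf3 C' hC'] at h; exact absurd h i1_ne_itop
      · rw [hf3 C hC, hf1 C' hC'] at h; exact absurd h.symm i0_ne_itop
      · rw [hf3 C hC, hf2 C' hC'] at h; exact absurd h.symm i1_ne_itop
      · exact Subtype.ext (hC.trans hC'.symm)
    · -- surjectivity
      intro y
      rcases I2_cases y.1 y.2 with hy | hy | hy
      · exact ⟨⟨{a}, hSa⟩, (hf1 _ rfl).trans (Subtype.ext hy.symm)⟩
      · exact ⟨⟨{b}, hSb⟩, (hf2 _ rfl).trans (Subtype.ext hy.symm)⟩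
      · exact ⟨⟨{a, b}, hSA⟩, (hf3 _ rfl).trans (Subtype.ext hy.symm)⟩
    · -- order isomorphism
      intro C C'
      rcases hclass C with hC | hC | hC <;> rcases hclass C' with hC' | hC' | hC'
      · rw [hC, hC', hf1 C hC, hf1 C' hC']
        exact iff_of_true (Or.inl ⟨rfl, rfl⟩) le_rfl
      · rw [hC, hC', hf1 C hC, hf2 C' hC']
        exact iff_of_false hnot_ab not_i0_le_i1
      · rw [hC, hC', hf1 C hC, hf3 C' hC']
        exact iff_of_true hSa.2 i0_le_itop
      · rw [hC, hC', hf2 C hC, hf1 C' hC']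
        exact iff_of_false hnot_ba not_i1_le_i0
      · rw [hC, hC', hf2 C hC, hf2 C' hC']
        exact iff_of_true (Or.inl ⟨rfl, rfl⟩) le_rfl
      · rw [hC, hC', hf2 C hC, hf3 C' hC']
        exact iff_of_true hSb.2 i1_le_itop
      · rw [hC, hC', hf3 C hC, hf1 C' hC']
        exact iff_of_false hnot_Aa not_itop_le_i0
      · rw [hC, hC', hf3 C hC, hf2 C' hC']
        exact iff_of_false hnot_Ab not_itop_le_i1
      · rw [hC, hC', hf3 C hC, hf3 C' hC']
        exact iff_of_true (Or.inl ⟨rfl, rfl⟩) le_rfl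
end

section
/- Let X and Y be J-posets and let φ: Str X → Str Y be an isomorphism of posets. If φ(A₁, {m₁}) and φ(A₂, {m₂}) both lie in (Str Y)_{{n}} for some m₁, m₂ ∈ X₂, n ∈ Y₂, and sets A₁, A₂ ⊆ X₁, then m₁ = m₂. Moreover, if φ(A, M) ∈ (Str Y)_{{n}} for some (A,M) ∈ Str X, then M = {m} is a singleton. -/
open Order Set

section StmtEleven

variable {X : Type*} [PartialOrder X]

private lemma ht_le' (h2 : Order.krullDim X = 2) (a : X) : Order.height a ≤ 2 := by
  have := Order.height_le_krullDim a
  rw [h2] at this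
  rw [show ((2:WithBot ℕ∞)) = ((2:ℕ∞) : WithBot ℕ∞) from rfl] at this
  exact_mod_cast this

private lemma ht_lt' (h2 : Order.krullDim X = 2) {a b : X} (h : a < b) :
    Order.height a < Order.height b :=
  Order.height_strictMono h (lt_of_le_of_lt (ht_le' h2 a) (by exact_mod_cast ENat.coe_lt_top 2))

private lemma mem_level_iff' {x : X} {i : ℕ} :
    x ∈ level X i ↔ Order.height x = (i : ℕ∞) := Iff.rfl

private lemma level2_of_gt' (h2 : Order.krullDim X = 2) {x z : X} (hx : x ∈ level X 1)
    (hz : x < z) : z ∈ level X 2 := by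
  have h1 : Order.height x < Order.height z := ht_lt' h2 hz
  rw [mem_level_iff'] at hx ⊢
  rw [hx] at h1
  have h3 : (2 : ℕ∞) ≤ Order.height z := by
    have := (ENat.add_one_le_iff (by simp : ((1:ℕ):ℕ∞) ≠ ⊤)).mpr h1
    convert this using 2 <;> norm_num
  have h4 := ht_le' h2 z
  have h5 : Order.height z = (2 : ℕ∞) := le_antisymm h4 h3
  rw [h5]; norm_num

private lemma lt_of_level_le' (_h2 : Order.krullDim X = 2) {a b : X} (ha : a ∈ level X 1)
    (hb : b ∈ level X 2) (h : a ≤ b) : a < b := by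
  rcases h.lt_or_eq with h | rfl
  · exact h
  · rw [mem_level_iff'] at ha hb
    rw [ha] at hb
    norm_num at hb

private lemma not_isMin_of_level2 (_h2 : Order.krullDim X = 2) {m : X} (hm : m ∈ level X 2) :
    ¬ IsMin m := by
  intro hmin
  have h0 : Order.height m = 0 := Order.height_eq_zero.mpr hmin
  rw [mem_level_iff'] at hm
  rw [h0] at hm
  norm_num at hm

private lemma K_nonempty' (h2 : Order.krullDim X = 2) {K : Set X} {m : X}
    (hm : m ∈ level X 2) (h : mub X K = {m}) : K.Nonempty := by
  rw [Set.nonempty_iff_ne_empty]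
  rintro rfl
  have hmmub : m ∈ mub X (∅ : Set X) := by rw [h]; rfl
  obtain ⟨y, hy⟩ := not_isMin_iff.mp (not_isMin_of_level2 h2 hm)
  exact hmmub.2 y (by simp [upperBounds]) hy

private lemma ub_eq_of_mub' (h2 : Order.krullDim X = 2) {K : Set X} {n : X}
    (hK : K ⊆ level X 1) (hn : n ∈ level X 2) (hm : mub X K = {n}) :
    ∀ m ∈ upperBounds K, m = n := by
  have hnK : n ∈ mub X K := by rw [hm]; rfl
  obtain ⟨hnub, hnmin⟩ := hnK
  have hKne : K.Nonempty := K_nonempty' h2 hn hm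
  intro m hmub
  by_contra hne
  have hmn : m ∉ mub X K := by rw [hm]; simpa using hne
  have hex : ∃ y ∈ upperBounds K, y < m := by
    by_contra hc
    push_neg at hc
    exact hmn ⟨hmub, hc⟩
  obtain ⟨y, hyub, hym⟩ := hex
  obtain ⟨k, hk⟩ := hKne
  rcases (hyub hk).lt_or_eq with hlt | heq
  · -- k < y < m : then y has height 2 and m has height > 2, contradiction
    have hy2 : y ∈ level X 2 := level2_of_gt' h2 (hK hk) hlt
    have hlt2 := ht_lt' h2 hym
    rw [mem_level_iff'] at hy2
    rw [hy2] at hlt2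
    exact absurd (ht_le' h2 m) (not_le.mpr (by exact_mod_cast hlt2))
  · -- y = k : then y is an upper bound of K below n, contradicting minimality of n
    subst heq
    exact hnmin k hyub (lt_of_level_le' h2 (hK hk) hn (hnub hk))

private lemma str_fst_finite (p : Str X) : p.1.1.Finite := by
  rcases p.2.2.2.1 with ⟨h, -⟩ | ⟨x, -, hA, -⟩
  · exact h
  · rw [hA]; exact Set.finite_singleton x

private lemma str_snd_nonempty (hX : IsJPoset X) (p : Str X) : p.1.2.Nonempty := by
  rcases p.2.2.2.1 with ⟨-, -, -, h⟩ | ⟨x, hx, -, hB⟩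
  · exact h
  · obtain ⟨z, hz⟩ := (hX.j2 x hx).nonempty
    exact ⟨z, hB ▸ ⟨level2_of_gt' hX.dim2 hx hz, hz⟩⟩

private lemma strLE_refl (p : Str X) : strLE p p := Or.inl ⟨rfl, rfl⟩

private lemma strLE_antisymm {p q : Str X} (h1 : strLE p q) (h2 : strLE q p) : p = q := by
  rcases h1 with ⟨hA, hB⟩ | ⟨W, hW⟩
  · exact Subtype.ext (Prod.ext hA hB)
  · rcases h2 with ⟨hA, hB⟩ | ⟨W', hW'⟩
    · exact (Subtype.ext (Prod.ext hA.symm hB.symm))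
    · exact absurd rfl (hW.1.trans hW'.1).ne

private lemma snd_subset_of_strLE {p q : Str X} (h : strLE p q) (hne : p ≠ q) :
    q.1.2 ⊆ p.1.2 := by
  rcases h with ⟨hA, hB⟩ | ⟨W, hW⟩
  · exact absurd (Subtype.ext (Prod.ext hA hB)) hne
  · exact hW.2.1

private lemma eq_singleton_of_subset {α : Type*} {s : Set α} {a : α} (h : s ⊆ {a})
    (h2 : s.Nonempty) : s = {a} := by
  obtain ⟨z, hz⟩ := h2
  have := h hz
  rw [Set.mem_singleton_iff] at this
  subst this
  exact Set.eq_singleton_iff_unique_mem.mpr ⟨hz, fun x hx => h hx⟩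

/-- The key construction: given a finite `A ⊆ X₁` and `m ∈ X₂`, there is `C` with
`(C, {m}) ∈ Str X` dominating every `(A', M')` with `A' ⊆ A` and `m ∈ M'`. -/
private lemma key_construction (hX : IsJPoset X) {A : Set X} (hA : A ⊆ level X 1)
    (hAfin : A.Finite) {m : X} (hm : m ∈ level X 2) :
    ∃ C : Set X, StrMem X C {m} ∧
      ∀ A' M' : Set X, A' ⊆ A → m ∈ M' → Dominates X C {m} A' M' (C \ A) := by
  obtain ⟨K, hK1, hKfin, hKdisj, hKmub⟩ := hX.j3 m hm A hA hAfin
  have hKne : K.Nonempty := K_nonempty' hX.dim2 hm hKmub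
  have hub : ∀ z ∈ upperBounds K, z = m := ub_eq_of_mub' hX.dim2 hK1 hm hKmub
  have hmub' : m ∈ upperBounds K := by
    have : m ∈ mub X K := by rw [hKmub]; rfl
    exact this.1
  have hklt : ∀ k ∈ K, k < m := fun k hk =>
    lt_of_level_le' hX.dim2 (hK1 hk) hm (hmub' hk)
  obtain ⟨k₀, hk₀⟩ := hKne
  refine ⟨A ∪ K, ⟨?_, ?_, ?_, ?_⟩, ?_⟩
  · exact Set.union_subset hA hK1
  · intro b hb
    rw [Set.mem_singleton_iff] at hb
    subst hb; exact hm
  · exact Or.inl ⟨hAfin.union hKfin, ⟨k₀, Or.inr hk₀⟩,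
      Set.finite_singleton m, Set.singleton_nonempty m⟩
  · exact ⟨k₀, Or.inr hk₀, fun b hb => by
      rw [Set.mem_singleton_iff] at hb; subst hb; exact hklt k₀ hk₀⟩
  · intro A' M' hA'A hmM'
    have hKsub : K ⊆ (A ∪ K) \ A := fun k hk =>
      ⟨Or.inr hk, fun hkA => (Set.disjoint_left.mp hKdisj hk) hkA⟩
    have hsub : (A ∪ K) \ A ⊆ K := fun x hx => hx.1.resolve_left hx.2
    refine ⟨?_, ?_, Set.diff_subset, ⟨k₀, hKsub hk₀⟩, ?_, ?_⟩
    · refine (Set.ssubset_iff_of_subset (hA'A.trans Set.subset_union_left)).mpr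
        ⟨k₀, Or.inr hk₀, fun hk₀A' => ?_⟩
      exact (Set.disjoint_left.mp hKdisj hk₀) (hA'A hk₀A')
    · intro b hb
      rw [Set.mem_singleton_iff] at hb; subst hb; exact hmM'
    · intro w hw d hd
      rw [Set.mem_singleton_iff] at hd; subst hd
      exact hklt w (hsub hw)
    · intro a ha m' ham' hwm'
      have : m' ∈ upperBounds K := fun k hk => (hwm' k (hKsub hk)).le
      rw [Set.mem_singleton_iff]
      exact hub m' this

end StmtEleven

/-- If `φ : Str X → Str Y` is an isomorphism and `φ(A₁,{m₁})`, `φ(A₂,{m₂})`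
both lie in `(Str Y)_{{n}}`, then `m₁ = m₂`; moreover, if `φ(A,M) ∈ (Str Y)_{{n}}`, then `M`
is a singleton. -/
theorem stmt_11 {X Y : Type*} [PartialOrder X] [PartialOrder Y]
    (hX : IsJPoset X) (hY : IsJPoset Y)
    (φ : Str X → Str Y) (hφsurj : Function.Surjective φ)
    (hφord : ∀ p q : Str X, strLE p q ↔ strLE (φ p) (φ q)) :
    (∀ (m₁ m₂ : X) (n : Y), m₁ ∈ level X 2 → m₂ ∈ level X 2 → n ∈ level Y 2 →
      ∀ p₁ p₂ : Str X, p₁.1.2 = {m₁} → p₂.1.2 = {m₂} →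
        (φ p₁).1.2 = {n} → (φ p₂).1.2 = {n} → m₁ = m₂) ∧
    (∀ (n : Y), n ∈ level Y 2 → ∀ p : Str X, (φ p).1.2 = {n} →
      ∃ m : X, p.1.2 = {m}) := by
  -- φ is injective
  have hinj : Function.Injective φ := by
    intro p q h
    exact strLE_antisymm ((hφord p q).mpr (by rw [h]; exact strLE_refl _))
      ((hφord q p).mpr (by rw [h]; exact strLE_refl _))
  -- Main step: given two elements of Str X whose images have second coordinate {n},
  -- any two elements of Str Y with second coordinate {n} have a common strict upper bound.
  have hdirected : ∀ (n : Y), n ∈ level Y 2 → ∀ q₁ q₂ : Str Y,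
      q₁.1.2 = {n} → q₂.1.2 = {n} →
      ∃ q₃ : Str Y, strLE q₁ q₃ ∧ strLE q₂ q₃ ∧ q₃ ≠ q₁ ∧ q₃ ≠ q₂ := by
    intro n hn q₁ q₂ h₁ h₂
    have hAsub : q₁.1.1 ∪ q₂.1.1 ⊆ level Y 1 := Set.union_subset q₁.2.1 q₂.2.1
    have hAfin : (q₁.1.1 ∪ q₂.1.1).Finite := (str_fst_finite q₁).union (str_fst_finite q₂)
    obtain ⟨C, hCmem, hCdom⟩ := key_construction hY hAsub hAfin hn
    have hd₁ := hCdom q₁.1.1 q₁.1.2 Set.subset_union_left (by rw [h₁]; rfl)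
    have hd₂ := hCdom q₂.1.1 q₂.1.2 Set.subset_union_right (by rw [h₂]; rfl)
    refine ⟨⟨(C, {n}), hCmem⟩, Or.inr ⟨_, hd₁⟩, Or.inr ⟨_, hd₂⟩, ?_, ?_⟩
    · intro h
      exact hd₁.1.ne (congrArg (fun r : Str Y => r.1.1) h).symm
    · intro h
      exact hd₂.1.ne (congrArg (fun r : Str Y => r.1.1) h).symm
  -- If strLE p r with p ≠ r, then r.1.2 ⊆ p.1.2 and r.1.2 nonempty
  have hsingle : ∀ (n : Y) (r₁ r₂ : Str X), (φ r₁).1.2 = {n} → (φ r₂).1.2 = {n} →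
      n ∈ level Y 2 → ∃ z : X, z ∈ r₁.1.2 ∧ z ∈ r₂.1.2 := by
    intro n r₁ r₂ h₁ h₂ hn
    obtain ⟨q₃, hq₁, hq₂, hne₁, hne₂⟩ := hdirected n hn (φ r₁) (φ r₂) h₁ h₂
    obtain ⟨r₃, hr₃⟩ := hφsurj q₃
    have hler₁ : strLE r₁ r₃ := (hφord r₁ r₃).mpr (by rw [hr₃]; exact hq₁)
    have hler₂ : strLE r₂ r₃ := (hφord r₂ r₃).mpr (by rw [hr₃]; exact hq₂)
    have hner₁ : r₁ ≠ r₃ := fun h => hne₁ (by rw [← hr₃, h])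
    have hner₂ : r₂ ≠ r₃ := fun h => hne₂ (by rw [← hr₃, h])
    obtain ⟨z, hz⟩ := str_snd_nonempty hX r₃
    exact ⟨z, snd_subset_of_strLE hler₁ hner₁ hz, snd_subset_of_strLE hler₂ hner₂ hz⟩
  constructor
  · -- Part 1
    intro m₁ m₂ n hm₁ hm₂ hn p₁ p₂ hp₁ hp₂ hq₁ hq₂
    obtain ⟨z, hz₁, hz₂⟩ := hsingle n p₁ p₂ hq₁ hq₂ hn
    rw [hp₁, Set.mem_singleton_iff] at hz₁
    rw [hp₂, Set.mem_singleton_iff] at hz₂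
    rw [← hz₁, ← hz₂]
  · -- Part 2
    intro n hn p hφp
    obtain ⟨m, hm⟩ := str_snd_nonempty hX p
    refine ⟨m, Set.eq_singleton_iff_unique_mem.mpr ⟨hm, fun m' hm' => ?_⟩⟩
    -- build r₁ = (C₁, {m'}), r₂ = (C₂, {m}) above p
    have hmlvl : m ∈ level X 2 := p.2.2.1 hm
    have hm'lvl : m' ∈ level X 2 := p.2.2.1 hm'
    have hAsub : p.1.1 ⊆ level X 1 := p.2.1
    have hAfin := str_fst_finite p
    obtain ⟨C₁, hC₁mem, hC₁dom⟩ := key_construction hX hAsub hAfin hm'lvl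
    obtain ⟨C₂, hC₂mem, hC₂dom⟩ := key_construction hX hAsub hAfin hmlvl
    set r₁ : Str X := ⟨(C₁, {m'}), hC₁mem⟩ with hr₁def
    set r₂ : Str X := ⟨(C₂, {m}), hC₂mem⟩ with hr₂def
    have hd₁ := hC₁dom p.1.1 p.1.2 subset_rfl hm'
    have hd₂ := hC₂dom p.1.1 p.1.2 subset_rfl hm
    have hle₁ : strLE p r₁ := Or.inr ⟨_, hd₁⟩
    have hle₂ : strLE p r₂ := Or.inr ⟨_, hd₂⟩
    have hnep₁ : p ≠ r₁ := fun h => hd₁.1.ne (congrArg (fun r : Str X => r.1.1) h)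
    have hnep₂ : p ≠ r₂ := fun h => hd₂.1.ne (congrArg (fun r : Str X => r.1.1) h)
    -- images of r₁, r₂ have second coordinate {n}
    have himg : ∀ r : Str X, strLE p r → p ≠ r → (φ r).1.2 = {n} := by
      intro r hle hne
      have hleφ : strLE (φ p) (φ r) := (hφord p r).mp hle
      have hneφ : φ p ≠ φ r := fun h => hne (hinj h)
      refine eq_singleton_of_subset ?_ (str_snd_nonempty hY (φ r))
      have := snd_subset_of_strLE hleφ hneφ
      rw [hφp] at this
      exact this
    obtain ⟨z, hz₁, hz₂⟩ := hsingle n r₁ r₂ (himg r₁ hle₁ hnep₁) (himg r₂ hle₂ hnep₂) hn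
    rw [hr₁def] at hz₁
    rw [hr₂def] at hz₂
    simp only [Set.mem_singleton_iff] at hz₁ hz₂
    rw [← hz₁, ← hz₂]
end

section
/- Let X and Y be J-posets and let φ: Str X → Str Y be an isomorphism of posets. For every x ∈ X₁ there exists s ∈ Y₁ such that φ({x}, {z ∈ X₂ : z > x}) = ({s}, {z ∈ Y₂ : z > s}). -/
open Order Set

namespace JPAux

variable {X : Type*} [PartialOrder X]

lemma height_le_two (h : Order.krullDim X = 2) (z : X) : Order.height z ≤ 2 := by
  have := Order.height_le_krullDim z
  rw [h, (by rfl : (2 : WithBot ℕ∞) = ((2:ℕ∞) : WithBot ℕ∞))] at this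
  exact WithBot.coe_le_coe.mp this

lemma height_lt_top (h : Order.krullDim X = 2) (z : X) : Order.height z < ⊤ :=
  lt_of_le_of_lt (height_le_two h z) (lt_top_iff_ne_top.mpr (by simp))

lemma mem_level_one {z : X} : z ∈ level X 1 ↔ Order.height z = 1 := by simp [level]

lemma mem_level_two {z : X} : z ∈ level X 2 ↔ Order.height z = 2 := by simp [level]

lemma lt_mem_level_two (h : Order.krullDim X = 2) {a z : X} (ha : a ∈ level X 1)
    (haz : a < z) : z ∈ level X 2 := by
  have h1 : Order.height a < Order.height z :=
    Order.height_strictMono haz (height_lt_top h a)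
  rw [mem_level_one.mp ha] at h1
  have h2 := height_le_two h z
  have := Order.add_one_le_of_lt h1
  exact mem_level_two.mpr (le_antisymm h2 (by exact_mod_cast this))

lemma special_set_infinite (hX : IsJPoset X) {a : X} (ha : a ∈ level X 1) :
    ({z ∈ level X 2 | a < z} : Set X).Infinite :=
  (hX.j2 a ha).mono (fun z hz => ⟨lt_mem_level_two hX.dim2 ha hz, hz⟩)

lemma special_mem (hX : IsJPoset X) {a : X} (ha : a ∈ level X 1) :
    StrMem X {a} {z ∈ level X 2 | a < z} :=
  ⟨Set.singleton_subset_iff.2 ha, Set.sep_subset _ _, Or.inr ⟨a, ha, rfl, rfl⟩,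
    a, Set.mem_singleton a, fun _ hb => hb.2⟩

lemma A_fin {A B : Set X} (h : StrMem X A B) : A.Finite := by
  rcases h.2.2.1 with ⟨h1, _⟩ | ⟨y, _, hA, _⟩
  · exact h1
  · rw [hA]; exact Set.finite_singleton y

lemma A_ne {A B : Set X} (h : StrMem X A B) : A.Nonempty := by
  rcases h.2.2.1 with ⟨_, h1, _⟩ | ⟨y, _, hA, _⟩
  · exact h1
  · rw [hA]; exact Set.singleton_nonempty y

lemma strLE_refl (p : Str X) : strLE p p := Or.inl ⟨rfl, rfl⟩

lemma strLE_antisymm {p q : Str X} (h1 : strLE p q) (h2 : strLE q p) : p = q := by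
  rcases h1 with ⟨hA, hB⟩ | ⟨W, hW⟩
  · exact Subtype.ext (Prod.ext hA hB)
  · rcases h2 with ⟨hA, hB⟩ | ⟨W', hW'⟩
    · exact (Subtype.ext (Prod.ext hA hB)).symm
    · exact absurd (hW.1.trans hW'.1) (ssubset_irrefl _)

lemma le_of_mub (h : Order.krullDim X = 2) {K : Set X} {d : X} (hmub : mub X K = {d})
    {m : X} (hm : m ∈ upperBounds K) : d ≤ m := by
  have hmem : ∀ {y : X}, y ∈ mub X K → y = d := fun hy => by rw [hmub] at hy; exact hy
  by_cases h1 : ∃ y ∈ upperBounds K, y < m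
  · obtain ⟨y1, hy1, hy1m⟩ := h1
    by_cases h2 : ∃ y ∈ upperBounds K, y < y1
    · obtain ⟨y2, hy2, hy21⟩ := h2
      by_cases h3 : ∃ y ∈ upperBounds K, y < y2
      · obtain ⟨y3, _, hy32⟩ := h3
        exfalso
        have b1 := Order.add_one_le_of_lt (Order.height_strictMono hy32 (height_lt_top h y3))
        have b2 := Order.add_one_le_of_lt (Order.height_strictMono hy21 (height_lt_top h y2))
        have b3 := Order.add_one_le_of_lt (Order.height_strictMono hy1m (height_lt_top h y1))
        have hkey : Order.height y3 + 3 ≤ Order.height m := by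
          calc Order.height y3 + 3 = Order.height y3 + 1 + 1 + 1 := by ring
          _ ≤ Order.height y2 + 1 + 1 := by
                exact add_le_add_left (add_le_add_left b1 1) 1
          _ ≤ Order.height y1 + 1 := add_le_add_left b2 1
          _ ≤ Order.height m := b3
        have h3le : (3:ℕ∞) ≤ 2 := le_trans (le_trans le_add_self hkey) (height_le_two h m)
        exact absurd h3le (by decide)
      · have he : y2 = d := hmem ⟨hy2, fun y hy hlt => h3 ⟨y, hy, hlt⟩⟩
        exact he ▸ (hy21.le.trans hy1m.le)
    · have he : y1 = d := hmem ⟨hy1, fun y hy hlt => h2 ⟨y, hy, hlt⟩⟩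
      exact he ▸ hy1m.le
  · have he : m = d := hmem ⟨hm, fun y hy hlt => h1 ⟨y, hy, hlt⟩⟩
    exact he.symm.le

/-- Any element of `Str X` that is uniquely determined by its strict up-set is special. -/
lemma special_of_solo (hX : IsJPoset X) (p : Str X)
    (hsolo : ∀ q : Str X, ({r | strLT p r} ⊆ {r | strLT q r}) → q = p) :
    ∃ s ∈ level X 1, p.1 = ({s}, {z ∈ level X 2 | s < z}) := by
  obtain ⟨hA1, hB2, hdisj, a₀, ha₀, ha₀lt⟩ := p.2
  rcases hdisj with ⟨hAfin, hAne, hBfin, hBne⟩ | ⟨y, hy, hA, hB⟩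
  swap
  · exact ⟨y, hy, Prod.ext hA hB⟩
  · exfalso
    have ha₀1 : a₀ ∈ level X 1 := hA1 ha₀
    set s : Str X := ⟨({a₀}, {z ∈ level X 2 | a₀ < z}), special_mem hX ha₀1⟩ with hs
    have hsub : {r | strLT p r} ⊆ {r | strLT s r} := by
      intro r hr
      obtain ⟨hle, hne⟩ := hr
      rcases hle with ⟨h1, h2⟩ | ⟨W, hAC, hDB, hWC, hWne, hE2, hE3⟩
      · exact absurd (Subtype.ext (Prod.ext h1 h2)) hne
      constructor
      · right
        refine ⟨W, ?_, ?_, hWC, hWne, hE2, ?_⟩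
        · exact ssubset_of_subset_of_ssubset (Set.singleton_subset_iff.2 ha₀) hAC
        · intro d hd
          exact ⟨hB2 (hDB hd), ha₀lt d (hDB hd)⟩
        · intro a ha m ham hWm
          have hax : a = a₀ := ha
          exact hE3 a₀ ha₀ m (hax ▸ ham) hWm
      · intro he
        rw [← he] at hAC
        exact hAC.2 (Set.singleton_subset_iff.2 ha₀)
    have heq := hsolo s hsub
    have he2 : p.1.2 = {z ∈ level X 2 | a₀ < z} := by rw [← heq]
    rw [he2] at hBfin
    exact special_set_infinite hX ha₀1 hBfin

/-- A special element of `Str X` is uniquely determined by its strict up-set. -/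
lemma solo_of_special (hX : IsJPoset X) {x : X} (hx : x ∈ level X 1) (p : Str X)
    (hp : p.1 = ({x}, {z ∈ level X 2 | x < z})) :
    ∀ q : Str X, ({r | strLT p r} ⊆ {r | strLT q r}) → q = p := by
  intro q hsub
  have hqA1 : q.1.1 ⊆ level X 1 := q.2.1
  have hqAfin : q.1.1.Finite := A_fin q.2
  have hqAne : q.1.1.Nonempty := A_ne q.2
  have hp1 : p.1.1 = {x} := by rw [hp]
  have hp2 : p.1.2 = {z ∈ level X 2 | x < z} := by rw [hp]
  have key : ∀ d ∈ p.1.2, q.1.1 = {x} ∧ d ∈ q.1.2 := by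
    intro d hd
    rw [hp2] at hd
    obtain ⟨hd2, hxd⟩ := hd
    obtain ⟨K, hK1, hKfin, hKdisj, hKmub⟩ :=
      hX.j3 d hd2 (insert x q.1.1) (Set.insert_subset_iff.mpr ⟨hx, hqA1⟩) (hqAfin.insert x)
    have hdK : d ∈ mub X K := by rw [hKmub]; exact Set.mem_singleton d
    have hKne : K.Nonempty := by
      rcases K.eq_empty_or_nonempty with hKe | h
      · exfalso
        rw [hKe] at hdK
        exact hdK.2 x (fun b hb => absurd hb (Set.notMem_empty b)) hxd
      · exact h
    obtain ⟨k, hk⟩ := hKne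
    have hknot : k ∉ insert x q.1.1 := Set.disjoint_left.mp hKdisj hk
    have hkx : k ≠ x := fun h => hknot (by rw [h]; exact Set.mem_insert x _)
    have hK2 : ∀ w ∈ K, w < d := by
      intro w hw
      have hle : w ≤ d := hdK.1 hw
      refine lt_of_le_of_ne hle fun he => ?_
      have hw1 : Order.height w = 1 := mem_level_one.mp (hK1 hw)
      have hd2' : Order.height d = 2 := mem_level_two.mp hd2
      rw [he, hd2'] at hw1
      norm_num at hw1
    have hrmem : StrMem X (insert x K) {d} := by
      refine ⟨Set.insert_subset_iff.mpr ⟨hx, hK1⟩, Set.singleton_subset_iff.2 hd2,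
        Or.inl ⟨hKfin.insert x, Set.insert_nonempty x K, Set.finite_singleton d,
          Set.singleton_nonempty d⟩, x, Set.mem_insert x K, ?_⟩
      intro b hb
      rw [Set.mem_singleton_iff] at hb
      exact hb ▸ hxd
    set r : Str X := ⟨(insert x K, {d}), hrmem⟩ with hr
    have hpr : strLT p r := by
      constructor
      · right
        refine ⟨K, ?_, ?_, Set.subset_insert x K, ⟨k, hk⟩, ?_, ?_⟩
        · rw [hp1]
          refine Set.ssubset_iff_subset_ne.mpr
            ⟨Set.singleton_subset_iff.2 (Set.mem_insert x K), fun he => ?_⟩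
          have : k ∈ ({x} : Set X) := by rw [he]; exact Set.mem_insert_of_mem x hk
          exact hkx (Set.mem_singleton_iff.mp this)
        · rw [hp2]
          exact Set.singleton_subset_iff.2 ⟨hd2, hxd⟩
        · intro w hw b hb
          rw [Set.mem_singleton_iff] at hb
          exact hb ▸ hK2 w hw
        · intro a ha m ham hWm
          rw [hp1, Set.mem_singleton_iff] at ha
          subst ha
          have hub : m ∈ upperBounds K := fun w hw => (hWm w hw).le
          have hdm := le_of_mub hX.dim2 hKmub hub
          rw [Set.mem_singleton_iff]
          rcases eq_or_lt_of_le hdm with he | hlt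
          · exact he.symm
          · exfalso
            have h2' : Order.height d = 2 := mem_level_two.mp hd2
            have := Order.height_strictMono hlt (height_lt_top hX.dim2 d)
            rw [h2'] at this
            exact absurd (lt_of_lt_of_le this (height_le_two hX.dim2 m)) (lt_irrefl _)
      · intro he
        have h11 : p.1.1 = insert x K := by rw [he]
        rw [hp1] at h11
        have : k ∈ ({x} : Set X) := by rw [h11]; exact Set.mem_insert_of_mem x hk
        exact hkx (Set.mem_singleton_iff.mp this)
    have hqr := hsub hpr
    obtain ⟨hle, hne⟩ := hqr
    rcases hle with ⟨h1, h2⟩ | ⟨W, hAC, hDB, _, _, _, _⟩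
    · exact absurd (Subtype.ext (Prod.ext h1 h2)) hne
    constructor
    · have hsubx : q.1.1 ⊆ {x} := by
        intro a ha
        rcases Set.mem_insert_iff.mp (hAC.1 ha) with h | haK
        · exact h ▸ Set.mem_singleton x
        · exact absurd (Set.mem_insert_of_mem x ha) (Set.disjoint_left.mp hKdisj haK)
      rcases Set.subset_singleton_iff_eq.mp hsubx with h | h
      · exact absurd h hqAne.ne_empty
      · exact h
    · exact hDB (Set.mem_singleton d)
  have hpinf : p.1.2.Infinite := by rw [hp2]; exact special_set_infinite hX hx
  have hBsub : p.1.2 ⊆ q.1.2 := fun d hd => (key d hd).2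
  obtain ⟨d₀, hd₀⟩ := hpinf.nonempty
  have hqA : q.1.1 = {x} := (key d₀ hd₀).1
  rcases q.2.2.2.1 with ⟨_, _, hqBfin, _⟩ | ⟨y, hy, hA, hB⟩
  · exact absurd (hqBfin.subset hBsub) hpinf
  · have hyx : y = x := by
      have h1 : ({y} : Set X) = {x} := hA.symm.trans hqA
      have : y ∈ ({x} : Set X) := by rw [← h1]; exact Set.mem_singleton y
      exact Set.mem_singleton_iff.mp this
    apply Subtype.ext
    apply Prod.ext
    · rw [hqA, hp1]
    · rw [hB, hyx, hp2]

end JPAux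
/-- If `φ : Str X → Str Y` is an isomorphism and `x ∈ X₁`, then
`φ({x}, {z ∈ X₂ : z > x}) = ({s}, {z ∈ Y₂ : z > s})` for some `s ∈ Y₁`. -/
theorem stmt_13 {X Y : Type*} [PartialOrder X] [PartialOrder Y]
    (hX : IsJPoset X) (hY : IsJPoset Y)
    (φ : Str X → Str Y) (hφsurj : Function.Surjective φ)
    (hφord : ∀ p q : Str X, strLE p q ↔ strLE (φ p) (φ q))
    (x : X) (hx : x ∈ level X 1)
    (p : Str X) (hp : p.1 = ({x}, {z ∈ level X 2 | x < z})) :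
    ∃ s ∈ level Y 1, (φ p).1 = ({s}, {z ∈ level Y 2 | s < z}) := by
  have hsolo := JPAux.solo_of_special hX hx p hp
  have hinj : Function.Injective φ := by
    intro a b hab
    have h1 : strLE (φ a) (φ b) := by rw [hab]; exact JPAux.strLE_refl _
    have h2 : strLE (φ b) (φ a) := by rw [hab]; exact JPAux.strLE_refl _
    exact JPAux.strLE_antisymm ((hφord a b).mpr h1) ((hφord b a).mpr h2)
  have hlt : ∀ a b : Str X, strLT a b ↔ strLT (φ a) (φ b) := by
    intro a b
    constructor
    · rintro ⟨h, ne⟩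
      exact ⟨(hφord a b).mp h, fun he => ne (hinj he)⟩
    · rintro ⟨h, ne⟩
      exact ⟨(hφord a b).mpr h, fun he => ne (congrArg φ he)⟩
  have hsoloY : ∀ q' : Str Y, ({r | strLT (φ p) r} ⊆ {r | strLT q' r}) → q' = φ p := by
    intro q' hsub'
    obtain ⟨q, rfl⟩ := hφsurj q'
    have hs : {r | strLT p r} ⊆ {r | strLT q r} := by
      intro r hr
      exact (hlt q r).mpr (hsub' ((hlt p r).mp hr))
    rw [hsolo q hs]
  exact JPAux.special_of_solo hY (φ p) hsoloY
end
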